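/- arXiv:1908.04248 — 2 statements merged into one kernel-verified Lean document; each statement's English description precedes it below -/
import Mathlib

section
/- For every τ ∈ ℍ₃ one has the theta-constant relation r₀₀(τ) = r₀₁(τ) + r₁₀(τ) (relation (6)). -/
open scoped BigOperators
open Complex Matrix Filter

noncomputable section

attribute [local instance] Matrix.normedAddCommGroup Matrix.normedSpace

/-- The Siegel upper half space of degree `g`: complex symmetric `g × g` matrices
whose imaginary part is positive definite. -/
def Hg (g : ℕ) : Set (Matrix (Fin g) (Fin g) ℂ) :=
  {τ | τ.IsSymm ∧ (Matrix.of fun i j => (τ i j).im).PosDef}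

/-- Theta function with (integer row vector) characteristics `[a; b]`. -/
def thetaFn (g : ℕ) (a b : Fin g → ℤ) (τ : Matrix (Fin g) (Fin g) ℂ)
    (z : Fin g → ℂ) : ℂ :=
  ∑' l : Fin g → ℤ,
    Complex.exp ((Real.pi : ℂ) * Complex.I *
        ∑ i, ∑ j, ((l i : ℂ) + (a i : ℂ) / 2) * τ i j * ((l j : ℂ) + (a j : ℂ) / 2)) *
    Complex.exp (2 * (Real.pi : ℂ) * Complex.I *
        ∑ i, ((l i : ℂ) + (a i : ℂ) / 2) * (z i + (b i : ℂ) / 2))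

/-- Theta constant with characteristics `[a; b]`. -/
def thetaNull (g : ℕ) (a b : Fin g → ℤ) (τ : Matrix (Fin g) (Fin g) ℂ) : ℂ :=
  thetaFn g a b τ 0

/-- The block matrix `[[τ', zᵀ], [z, t]]` built from `τ' ∈ ℍ₃`, a row vector
`z ∈ ℂ³` and `t ∈ ℍ₁`. -/
def blk (τ' : Matrix (Fin 3) (Fin 3) ℂ) (z : Fin 3 → ℂ) (t : ℂ) :
    Matrix (Fin 4) (Fin 4) ℂ :=
  Matrix.of fun i j =>
    if hi : (i : ℕ) < 3 then
      if hj : (j : ℕ) < 3 then τ' ⟨i, hi⟩ ⟨j, hj⟩ else z ⟨i, hi⟩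
    else
      if hj : (j : ℕ) < 3 then z ⟨j, hj⟩ else t

/-- `R_{μν}`, a product of eight genus-4 theta constants. -/
def Rmn (μ ν : ℤ) (τ : Matrix (Fin 4) (Fin 4) ℂ) : ℂ :=
  ∏ α : Fin 2, ∏ β : Fin 2, ∏ γ : Fin 2,
    thetaNull 4 ![μ, 0, 0, 0] ![ν, (α : ℕ), (β : ℕ), (γ : ℕ)] τ

/-- The Schottky form `J₈` on `ℍ₄`. -/
def J8 (τ : Matrix (Fin 4) (Fin 4) ℂ) : ℂ :=
  (Rmn 0 0 τ ^ 2 + Rmn 0 1 τ ^ 2 + Rmn 1 0 τ ^ 2 -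
      2 * (Rmn 0 0 τ * Rmn 0 1 τ + Rmn 0 0 τ * Rmn 1 0 τ + Rmn 0 1 τ * Rmn 1 0 τ)) / 2 ^ 16

/-- `r_{μν}`, a product of four genus-3 theta constants. -/
def rmn (μ ν : ℤ) (τ : Matrix (Fin 3) (Fin 3) ℂ) : ℂ :=
  ∏ α : Fin 2, ∏ β : Fin 2, thetaNull 3 ![μ, 0, 0] ![ν, (α : ℕ), (β : ℕ)] τ

/-- `s_{μν}(τ, z)`, a sum of four squares of quotients of theta functions. -/
def smn (μ ν : ℤ) (τ : Matrix (Fin 3) (Fin 3) ℂ) (z : Fin 3 → ℂ) : ℂ :=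
  ∑ α : Fin 2, ∑ β : Fin 2,
    (thetaFn 3 ![μ, 0, 0] ![ν, (α : ℕ), (β : ℕ)] τ z /
        thetaNull 3 ![μ, 0, 0] ![ν, (α : ℕ), (β : ℕ)] τ) ^ 2

/-- Partial derivative of a function of `z ∈ ℂ³` in the `i`-th coordinate. -/
def pd (i : Fin 3) (f : (Fin 3 → ℂ) → ℂ) : (Fin 3 → ℂ) → ℂ :=
  fun z => deriv (fun w : ℂ => f (Function.update z i w)) (z i)

/-- Iterated partial derivative `∂^{I₀+I₁+I₂}/∂z₁^{I₀}∂z₂^{I₁}∂z₃^{I₂}`. -/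
def pdMulti (I : Fin 3 → ℕ) (f : (Fin 3 → ℂ) → ℂ) : (Fin 3 → ℂ) → ℂ :=
  (pd 0)^[I 0] <| (pd 1)^[I 1] <| (pd 2)^[I 2] f

/-- The coordinate `c_I` of `χ_{4,0,8}`, defined as the limit
`lim_{t → ∞} e^{2πt} ∂⁴_I J₈([[τ, zᵀ],[z, it]])|_{z=0}`. -/
def cI (I : Fin 3 → ℕ) (τ : Matrix (Fin 3) (Fin 3) ℂ) : ℂ :=
  limUnder Filter.atTop fun t : ℝ =>
    (Real.exp (2 * Real.pi * t) : ℂ) *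
      pdMulti I (fun z => J8 (blk τ z (Complex.I * (t : ℂ)))) 0

/-- `χ_{4,0,8}(τ)` as a quartic form in `x = (x₁, x₂, x₃)`. -/
def chi408 (τ : Matrix (Fin 3) (Fin 3) ℂ) (x : Fin 3 → ℂ) : ℂ :=
  ∑ I ∈ Finset.Nat.antidiagonalTuple 3 4,
    cI I τ * (∏ i, x i ^ I i) / ∏ i, ((I i).factorial : ℂ)

/-- `χ₁₈`, the product of the 36 even theta constants of genus 3. -/
def chi18 (τ : Matrix (Fin 3) (Fin 3) ℂ) : ℂ :=
  ∏ a : Fin 3 → Fin 2, ∏ b : Fin 3 → Fin 2,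
    if Even (∑ i, (a i : ℕ) * (b i : ℕ)) then
      thetaNull 3 (fun i => ((a i : ℕ) : ℤ)) (fun i => ((b i : ℕ) : ℤ)) τ
    else 1

/-- An element of `Sp(6, ℤ)` in block form `[[a, b], [c, d]]`, i.e. four integer
`3 × 3` matrices satisfying the standard symplectic relations. -/
structure Sp6 : Type where
  a : Matrix (Fin 3) (Fin 3) ℤ
  b : Matrix (Fin 3) (Fin 3) ℤ
  c : Matrix (Fin 3) (Fin 3) ℤ
  d : Matrix (Fin 3) (Fin 3) ℤ
  hac : aᵀ * c = cᵀ * a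
  hbd : bᵀ * d = dᵀ * b
  had : aᵀ * d - cᵀ * b = 1

/-- Integer matrix viewed as a complex matrix. -/
def mc (m : Matrix (Fin 3) (Fin 3) ℤ) : Matrix (Fin 3) (Fin 3) ℂ :=
  m.map fun x => (x : ℂ)

/-- The automorphy factor `cτ + d`. -/
def jmat (γ : Sp6) (τ : Matrix (Fin 3) (Fin 3) ℂ) : Matrix (Fin 3) (Fin 3) ℂ :=
  mc γ.c * τ + mc γ.d

/-- The action `γ · τ = (aτ + b)(cτ + d)⁻¹` of `Sp(6, ℤ)` on `ℍ₃`. -/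
def spAct (γ : Sp6) (τ : Matrix (Fin 3) (Fin 3) ℂ) : Matrix (Fin 3) (Fin 3) ℂ :=
  (mc γ.a * τ + mc γ.b) * (jmat γ τ)⁻¹

/-- The matrix `E₃₃` with `(3,3)` entry `1` and all other entries `0`. -/
def E33 : Matrix (Fin 3) (Fin 3) ℂ := Matrix.single 2 2 1

/-- Derivative of a function on `ℍ₃` with respect to the symmetric coordinate `τ_{ab}`. -/
def mdOp (a b : Fin 3) (f : Matrix (Fin 3) (Fin 3) ℂ → ℂ) :
    Matrix (Fin 3) (Fin 3) ℂ → ℂ :=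
  fun τ => deriv (fun w : ℂ =>
    f (τ + w • (Matrix.single a b (1 : ℂ) + Matrix.single b a 1))) 0

/-- Multi-indices of ternary-quartic monomials: `I : Fin 3 → ℕ` with `∑ I = 4`. -/
abbrev QIdx : Type := {I : Fin 3 → ℕ // I ∈ Finset.Nat.antidiagonalTuple 3 4}

/-- Multi-indices of ternary-quadratic monomials. -/
abbrev C2Idx : Type := {I : Fin 3 → ℕ // I ∈ Finset.Nat.antidiagonalTuple 3 2}

/-- The ternary quartic with (normalized) coefficient vector `aa`, evaluated at `v`. -/
def quarticEval (aa : QIdx → ℂ) (v : Fin 3 → ℂ) : ℂ :=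
  ∑ I : QIdx, ((Nat.factorial 4 : ℂ) / ∏ i, ((I.1 i).factorial : ℂ)) * aa I * ∏ i, v i ^ I.1 i

/-- A ternary quadratic form with coefficient vector `bb`, evaluated at `v`. -/
def quadEval (bb : C2Idx → ℂ) (v : Fin 3 → ℂ) : ℂ :=
  ∑ I : C2Idx, bb I * ∏ i, v i ^ I.1 i

/-- The second exterior power of a `3 × 3` matrix in the basis
`e₂∧e₃, e₃∧e₁, e₁∧e₂`. -/
def lam2 (M : Matrix (Fin 3) (Fin 3) ℂ) : Matrix (Fin 3) (Fin 3) ℂ :=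
  Matrix.of fun i j =>
    M (i + 1) (j + 1) * M (i + 2) (j + 2) - M (i + 1) (j + 2) * M (i + 2) (j + 1)

/-- Variables of a concomitant: the 15 coefficients `a_I`, the variables `x`, and `x̂`. -/
abbrev ConcVar : Type := QIdx ⊕ (Fin 3 ⊕ Fin 3)

/-- Evaluation of a concomitant (as polynomial) at coefficients `aa` and vectors `x`, `x̂`. -/
def evalConc (c : MvPolynomial ConcVar ℂ) (aa : QIdx → ℂ) (x xh : Fin 3 → ℂ) : ℂ :=
  MvPolynomial.eval (Sum.elim aa (Sum.elim x xh)) c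

/-- `c` is a concomitant of ternary quartics of degree `d` and bidegree `(i, j)`:
it is trihomogeneous of degrees `d`, `i`, `j` in the coefficients, in `x`, and in `x̂`,
and it is `SL(3, ℂ)`-equivariant. -/
structure IsConcomitant (c : MvPolynomial ConcVar ℂ) (d i j : ℕ) : Prop where
  homA : c.IsWeightedHomogeneous (Sum.elim (fun _ => 1) fun _ => 0) d
  homX : c.IsWeightedHomogeneous (Sum.elim (fun _ => 0) (Sum.elim (fun _ => 1) fun _ => 0)) i
  homXh : c.IsWeightedHomogeneous (Sum.elim (fun _ => 0) (Sum.elim (fun _ => 0) fun _ => 1)) j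
  equivar : ∀ A : Matrix (Fin 3) (Fin 3) ℂ, A.det = 1 →
    ∀ aa aa' : QIdx → ℂ,
      (∀ v : Fin 3 → ℂ, quarticEval aa' v = quarticEval aa (Aᵀ *ᵥ v)) →
      ∀ x xh : Fin 3 → ℂ,
        evalConc c aa' x xh = evalConc c aa (Aᵀ *ᵥ x) (lam2 Aᵀ *ᵥ xh)

/-- `c` vanishes to order `≥ m` along the locus of double conics: for every quartic `f`
(with coefficients `aa`) and every quadratic `g` (with coefficients `bb`, and `sq` the
coefficient vector of `g²`), `c` evaluated at the coefficients of `t·f + g²` is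
divisible by `t^m` (all `t`-derivatives of order `< m` vanish at `t = 0`). -/
def VanishesDC (c : MvPolynomial ConcVar ℂ) (m : ℕ) : Prop :=
  ∀ (aa : QIdx → ℂ) (bb : C2Idx → ℂ) (sq : QIdx → ℂ),
    (∀ v : Fin 3 → ℂ, quarticEval sq v = quadEval bb v ^ 2) →
    ∀ x xh : Fin 3 → ℂ, ∀ k : ℕ, k < m →
      iteratedDeriv k (fun t : ℂ => evalConc c (fun I => t * aa I + sq I) x xh) 0 = 0

/-- Bihomogeneous polynomials in `x` and `x̂`. -/
abbrev BiPoly : Type := MvPolynomial (Fin 3 ⊕ Fin 3) ℂ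

def evalBi (P : BiPoly) (x xh : Fin 3 → ℂ) : ℂ :=
  MvPolynomial.eval (Sum.elim x xh) P

/-- `P` is bihomogeneous of bidegree `(i, j)` in `(x, x̂)`. -/
def IsBihom (P : BiPoly) (i j : ℕ) : Prop :=
  P.IsWeightedHomogeneous (Sum.elim (fun _ => 1) fun _ => 0) i ∧
  P.IsWeightedHomogeneous (Sum.elim (fun _ => 0) fun _ => 1) j

/-- A polynomial-valued map is holomorphic on `ℍ₃` if all its coefficients are. -/
def HoloPolyMap (H : Matrix (Fin 3) (Fin 3) ℂ → BiPoly) : Prop :=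
  ∀ m : (Fin 3 ⊕ Fin 3) →₀ ℕ,
    DifferentiableOn ℂ (fun τ => MvPolynomial.coeff m (H τ)) (Hg 3)

/-- The coefficient vector of the quartic `χ_{4,0,8}(τ)`, i.e. `a_I = c_I(τ)/4!`. -/
def chiCoef (τ : Matrix (Fin 3) (Fin 3) ℂ) : QIdx → ℂ :=
  fun I => cI I.1 τ / (Nat.factorial 4 : ℂ)

/-- A Siegel modular form of degree 3 and weight `(i, j, k)`: a holomorphic map
from `ℍ₃` to the bihomogeneous polynomials of bidegree `(i, j)` with the standard
transformation law under `Sp(6, ℤ)`. -/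
def IsSiegelMF (F : Matrix (Fin 3) (Fin 3) ℂ → BiPoly) (i j : ℕ) (k : ℤ) : Prop :=
  HoloPolyMap F ∧ (∀ τ ∈ Hg 3, IsBihom (F τ) i j) ∧
  ∀ γ : Sp6, ∀ τ ∈ Hg 3, ∀ x xh : Fin 3 → ℂ,
    evalBi (F (spAct γ τ)) x xh =
      (jmat γ τ).det ^ k *
        evalBi (F τ) ((jmat γ τ)ᵀ *ᵥ x) (lam2 (jmat γ τ)ᵀ *ᵥ xh)

/-- `F` vanishes to order `≥ n` along the divisor `D` at infinity. -/
def VanishesAtInfinity (F : Matrix (Fin 3) (Fin 3) ℂ → BiPoly) (n : ℤ) : Prop :=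
  ∀ τ ∈ Hg 3, ∃ B : ℝ, ∀ t : ℝ, 0 ≤ t → ∀ m : (Fin 3 ⊕ Fin 3) →₀ ℕ,
    ‖MvPolynomial.coeff m (F (τ + (Complex.I * (t : ℂ)) • E33))‖ *
      Real.exp (2 * Real.pi * n * t) ≤ B

/-- `χ_{4,0,8}(τ)` as a bihomogeneous polynomial of bidegree `(4, 0)`. -/
def chi408Poly (τ : Matrix (Fin 3) (Fin 3) ℂ) : BiPoly :=
  ∑ I : QIdx,
    MvPolynomial.C (cI I.1 τ / ∏ i, ((I.1 i).factorial : ℂ)) *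
      ∏ i, (MvPolynomial.X (Sum.inl i) : BiPoly) ^ I.1 i

namespace Rel6

local notation "πc" => (Real.pi : ℂ)

/-- The quadratic form attached to `τ`. -/
def Qf (τ : Matrix (Fin 3) (Fin 3) ℂ) (x : Fin 3 → ℂ) : ℂ := ∑ i, ∑ j, x i * τ i j * x j

/-- Summand of the theta constant. -/
def thTerm (τ : Matrix (Fin 3) (Fin 3) ℂ) (a b : Fin 3 → ℤ) (l : Fin 3 → ℤ) : ℂ :=
  Complex.exp (πc * Complex.I * Qf τ fun i => (l i : ℂ) + (a i : ℂ) / 2) *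
  Complex.exp (2 * πc * Complex.I * ∑ i, ((l i : ℂ) + (a i : ℂ) / 2) * ((b i : ℂ) / 2))

/-- Summand of the auxiliary lattice sum. -/
def hTerm (τ : Matrix (Fin 3) (Fin 3) ℂ) (k : Fin 3 → ℤ) (p : Fin 3 → ℤ) : ℂ :=
  Complex.exp (2 * πc * Complex.I * Qf τ fun i => (p i : ℂ) + (k i : ℂ) / 2) *
  Complex.exp (πc * Complex.I * ((p 1 : ℂ) + (p 2 : ℂ)))

def hFun (τ : Matrix (Fin 3) (Fin 3) ℂ) (k : Fin 3 → ℤ) : ℂ := ∑' p : Fin 3 → ℤ, hTerm τ k p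

lemma thetaNull_eq (a b : Fin 3 → ℤ) (τ : Matrix (Fin 3) (Fin 3) ℂ) :
    thetaNull 3 a b τ = ∑' l : Fin 3 → ℤ, thTerm τ a b l := by
  unfold thetaNull thetaFn thTerm Qf
  exact tsum_congr fun l => by simp

/-! ### Coercivity of a positive definite quadratic form -/

lemma posdef_coercive {Y : Matrix (Fin 3) (Fin 3) ℝ} (hY : Y.PosDef) :
    ∃ c > 0, ∀ x : Fin 3 → ℝ, c * ∑ i, x i ^ 2 ≤ ∑ i, ∑ j, x i * Y i j * x j := by
  set QR : (Fin 3 → ℝ) → ℝ := fun x => ∑ i, ∑ j, x i * Y i j * x j with hQR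
  have hdot : ∀ x : Fin 3 → ℝ, QR x = dotProduct x (Y *ᵥ x) := by
    intro x
    simp [QR, dotProduct, Matrix.mulVec, Finset.mul_sum, mul_assoc]
  have hpos : ∀ x : Fin 3 → ℝ, x ≠ 0 → 0 < QR x := by
    intro x hx
    rw [hdot]
    simpa using hY.dotProduct_mulVec_pos hx
  have hcont : Continuous QR := by
    exact continuous_finset_sum _ fun i _ => continuous_finset_sum _ fun j _ =>
      ((continuous_apply i).mul continuous_const).mul (continuous_apply j)
  have hsph : IsCompact (Metric.sphere (0 : Fin 3 → ℝ) 1) := isCompact_sphere _ _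
  have hne : (Metric.sphere (0 : Fin 3 → ℝ) 1).Nonempty :=
    NormedSpace.sphere_nonempty.mpr zero_le_one
  obtain ⟨x₀, hx₀s, hx₀min⟩ := hsph.exists_isMinOn hne hcont.continuousOn
  have hx₀n : ‖x₀‖ = 1 := by simpa using hx₀s
  have hx₀ne : x₀ ≠ 0 := by
    intro h; rw [h] at hx₀n; simp at hx₀n
  have hc : 0 < QR x₀ := hpos x₀ hx₀ne
  have hQsmul : ∀ (t : ℝ) (x : Fin 3 → ℝ), QR (t • x) = t ^ 2 * QR x := by
    intro t x
    simp only [QR, Pi.smul_apply, smul_eq_mul, Finset.mul_sum]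
    refine Finset.sum_congr rfl fun i _ => Finset.sum_congr rfl fun j _ => by ring
  have hlow : ∀ x : Fin 3 → ℝ, QR x₀ * ‖x‖ ^ 2 ≤ QR x := by
    intro x
    rcases eq_or_ne x 0 with rfl | hx
    · simp [QR]
    · have hnx : (0:ℝ) < ‖x‖ := norm_pos_iff.mpr hx
      have hmem : (‖x‖⁻¹ • x) ∈ Metric.sphere (0 : Fin 3 → ℝ) 1 := by
        simp [norm_smul, abs_of_pos (inv_pos.mpr hnx), inv_mul_cancel₀ hnx.ne']
      have h2 : QR (‖x‖⁻¹ • x) = ‖x‖⁻¹ ^ 2 * QR x := hQsmul _ _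
      have this : QR x₀ ≤ ‖x‖⁻¹ ^ 2 * QR x := h2 ▸ hx₀min hmem
      have h3 : QR x₀ * ‖x‖ ^ 2 ≤ (‖x‖⁻¹ ^ 2 * QR x) * ‖x‖ ^ 2 := by
        apply mul_le_mul_of_nonneg_right this (by positivity)
      calc QR x₀ * ‖x‖ ^ 2 ≤ (‖x‖⁻¹ ^ 2 * QR x) * ‖x‖ ^ 2 := h3
        _ = QR x := by field_simp
  refine ⟨QR x₀ / 3, by positivity, fun x => ?_⟩
  have hsum : ∑ i, x i ^ 2 ≤ 3 * ‖x‖ ^ 2 := by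
    have h1 : ∀ i : Fin 3, x i ^ 2 ≤ ‖x‖ ^ 2 := by
      intro i
      have := norm_le_pi_norm x i
      have h0 : |x i| ≤ ‖x‖ := by simpa [Real.norm_eq_abs] using this
      calc x i ^ 2 = |x i| ^ 2 := (_root_.sq_abs _).symm
        _ ≤ ‖x‖ ^ 2 := by
            apply pow_le_pow_left₀ (abs_nonneg _) h0
    calc ∑ i, x i ^ 2 ≤ ∑ _i : Fin 3, ‖x‖ ^ 2 := Finset.sum_le_sum fun i _ => h1 i
      _ = 3 * ‖x‖ ^ 2 := by simp [Fin.sum_univ_three]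
  calc QR x₀ / 3 * ∑ i, x i ^ 2 ≤ QR x₀ / 3 * (3 * ‖x‖ ^ 2) := by
        apply mul_le_mul_of_nonneg_left hsum (by positivity)
    _ = QR x₀ * ‖x‖ ^ 2 := by ring
    _ ≤ QR x := hlow x

/-! ### Summability -/

lemma summable_exp_neg_sq_nat {c : ℝ} (hc : 0 < c) (v : ℝ) :
    Summable fun n : ℕ => Real.exp (-c * ((n : ℝ) + v) ^ 2) := by
  have hgeo : Summable fun n : ℕ => Real.exp (c * v ^ 2) * Real.exp (-c / 2) ^ n := by
    apply Summable.mul_left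
    apply summable_geometric_of_lt_one (Real.exp_pos _).le
    rw [show (1:ℝ) = Real.exp 0 by simp]
    exact Real.exp_lt_exp.mpr (by linarith)
  apply Summable.of_nonneg_of_le (fun n => (Real.exp_pos _).le) _ hgeo
  intro n
  rw [← Real.exp_nat_mul, ← Real.exp_add]
  apply Real.exp_le_exp.mpr
  have hn : (n : ℝ) ≤ (n : ℝ) ^ 2 := by
    rcases Nat.eq_zero_or_pos n with rfl | hn
    · simp
    · have h1 : (1:ℝ) ≤ (n:ℝ) := by exact_mod_cast hn
      nlinarith
  nlinarith [sq_nonneg ((n : ℝ) + 2 * v)]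

lemma summable_exp_neg_sq {c : ℝ} (hc : 0 < c) (v : ℝ) :
    Summable fun n : ℤ => Real.exp (-c * ((n : ℝ) + v) ^ 2) := by
  apply Summable.of_nat_of_neg
  · exact summable_exp_neg_sq_nat hc v
  · apply (summable_exp_neg_sq_nat hc (-v)).congr
    intro n
    congr 1
    push_cast
    ring

/-- The coordinate equivalence `(Fin 3 → ℤ) ≃ ℤ × ℤ × ℤ`. -/
def e3 : (Fin 3 → ℤ) ≃ ℤ × ℤ × ℤ where
  toFun l := (l 0, l 1, l 2)
  invFun p := ![p.1, p.2.1, p.2.2]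
  left_inv l := by funext i; fin_cases i <;> rfl
  right_inv p := rfl

set_option maxHeartbeats 1000000 in
lemma summable_master {c : ℝ} (hc : 0 < c) (v : Fin 3 → ℝ) :
    Summable fun l : Fin 3 → ℤ => Real.exp (-c * ∑ i, ((l i : ℝ) + v i) ^ 2) := by
  have h1 : ∀ w : ℝ, Summable fun n : ℤ => Real.exp (-c * ((n : ℝ) + w) ^ 2) :=
    fun w => summable_exp_neg_sq hc w
  have h23 : Summable fun q : ℤ × ℤ =>
      Real.exp (-c * ((q.1 : ℝ) + v 1) ^ 2) * Real.exp (-c * ((q.2 : ℝ) + v 2) ^ 2) :=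
    (h1 (v 1)).mul_of_nonneg (h1 (v 2)) (fun _ => (Real.exp_pos _).le)
      (fun _ => (Real.exp_pos _).le)
  have h2 : Summable fun p : ℤ × ℤ × ℤ =>
      Real.exp (-c * ((p.1 : ℝ) + v 0) ^ 2) *
        (Real.exp (-c * ((p.2.1 : ℝ) + v 1) ^ 2) * Real.exp (-c * ((p.2.2 : ℝ) + v 2) ^ 2)) :=
    (h1 (v 0)).mul_of_nonneg h23 (fun _ => (Real.exp_pos _).le)
      (fun q => mul_nonneg (Real.exp_pos _).le (Real.exp_pos _).le)
  have h3 : Summable fun l : Fin 3 → ℤ =>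
      Real.exp (-c * ((l 0 : ℝ) + v 0) ^ 2) *
        (Real.exp (-c * ((l 1 : ℝ) + v 1) ^ 2) * Real.exp (-c * ((l 2 : ℝ) + v 2) ^ 2)) := by
    have h4 := (e3.summable_iff (f := fun p : ℤ × ℤ × ℤ =>
      Real.exp (-c * ((p.1 : ℝ) + v 0) ^ 2) *
        (Real.exp (-c * ((p.2.1 : ℝ) + v 1) ^ 2) *
          Real.exp (-c * ((p.2.2 : ℝ) + v 2) ^ 2)))).mpr h2
    exact h4.congr fun l => rfl
  apply h3.congr
  intro l
  rw [Fin.sum_univ_three, ← Real.exp_add, ← Real.exp_add]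
  congr 1
  ring

lemma norm_exp_ofReal_mul_I_mul (t : ℝ) (z : ℂ) :
    ‖Complex.exp ((t : ℂ) * Complex.I * z)‖ = Real.exp (-t * z.im) := by
  rw [Complex.norm_exp]
  congr 1
  simp [Complex.mul_re]

lemma im_Qf (τ : Matrix (Fin 3) (Fin 3) ℂ) (r : Fin 3 → ℝ) :
    (Qf τ fun i => ((r i : ℝ) : ℂ)).im = ∑ i, ∑ j, r i * (τ i j).im * r j := by
  simp [Qf, Fin.sum_univ_three, Complex.add_im, Complex.mul_im]

lemma norm_thTerm (τ : Matrix (Fin 3) (Fin 3) ℂ) (a b l : Fin 3 → ℤ) :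
    ‖thTerm τ a b l‖ = Real.exp (-Real.pi *
      ∑ i, ∑ j, ((l i : ℝ) + (a i : ℝ) / 2) * (τ i j).im * ((l j : ℝ) + (a j : ℝ) / 2)) := by
  unfold thTerm
  rw [norm_mul]
  have h1 : (Qf τ fun i => (l i : ℂ) + (a i : ℂ) / 2)
      = Qf τ fun i => ((((l i : ℝ) + (a i : ℝ) / 2) : ℝ) : ℂ) := by
    unfold Qf
    simp only [show ∀ i : Fin 3, ((l i : ℂ) + (a i : ℂ) / 2)
      = ((((l i : ℝ) + (a i : ℝ) / 2) : ℝ) : ℂ) from fun i => by push_cast; ring]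
  rw [h1, norm_exp_ofReal_mul_I_mul, im_Qf]
  have h2 : 2 * πc * Complex.I * (∑ i, ((l i : ℂ) + (a i : ℂ) / 2) * ((b i : ℂ) / 2))
      = ((2 * Real.pi : ℝ) : ℂ) * Complex.I *
        (((∑ i, ((l i : ℝ) + (a i : ℝ) / 2) * ((b i : ℝ) / 2) : ℝ)) : ℂ) := by
    push_cast
    ring
  rw [h2, norm_exp_ofReal_mul_I_mul]
  simp

lemma norm_hTerm (τ : Matrix (Fin 3) (Fin 3) ℂ) (k p : Fin 3 → ℤ) :
    ‖hTerm τ k p‖ = Real.exp (-(2 * Real.pi) *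
      ∑ i, ∑ j, ((p i : ℝ) + (k i : ℝ) / 2) * (τ i j).im * ((p j : ℝ) + (k j : ℝ) / 2)) := by
  unfold hTerm
  rw [norm_mul]
  have h1 : 2 * πc * Complex.I * (Qf τ fun i => (p i : ℂ) + (k i : ℂ) / 2)
      = ((2 * Real.pi : ℝ) : ℂ) * Complex.I *
        (Qf τ fun i => ((((p i : ℝ) + (k i : ℝ) / 2) : ℝ) : ℂ)) := by
    unfold Qf
    simp only [show ∀ i : Fin 3, ((p i : ℂ) + (k i : ℂ) / 2)
      = ((((p i : ℝ) + (k i : ℝ) / 2) : ℝ) : ℂ) from fun i => by push_cast; ring]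
    push_cast
    ring
  rw [h1, norm_exp_ofReal_mul_I_mul, im_Qf]
  have h2 : πc * Complex.I * ((p 1 : ℂ) + (p 2 : ℂ))
      = ((Real.pi : ℝ) : ℂ) * Complex.I * ((((p 1 : ℝ) + (p 2 : ℝ) : ℝ)) : ℂ) := by
    push_cast
    ring
  rw [h2, norm_exp_ofReal_mul_I_mul]
  simp

lemma summable_norm_thTerm {τ : Matrix (Fin 3) (Fin 3) ℂ} (hτ : τ ∈ Hg 3) (a b : Fin 3 → ℤ) :
    Summable fun l : Fin 3 → ℤ => ‖thTerm τ a b l‖ := by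
  obtain ⟨c, hc, hco⟩ := posdef_coercive hτ.2
  refine Summable.of_nonneg_of_le (fun _ => norm_nonneg _) ?_
    (summable_master (c := Real.pi * c) (by positivity) fun i => (a i : ℝ) / 2)
  intro l
  rw [norm_thTerm]
  apply Real.exp_le_exp.mpr
  have h := hco fun i => (l i : ℝ) + (a i : ℝ) / 2
  simp only [Matrix.of_apply] at h
  nlinarith [Real.pi_pos]

lemma summable_norm_hTerm {τ : Matrix (Fin 3) (Fin 3) ℂ} (hτ : τ ∈ Hg 3) (k : Fin 3 → ℤ) :
    Summable fun p : Fin 3 → ℤ => ‖hTerm τ k p‖ := by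
  obtain ⟨c, hc, hco⟩ := posdef_coercive hτ.2
  refine Summable.of_nonneg_of_le (fun _ => norm_nonneg _) ?_
    (summable_master (c := 2 * Real.pi * c) (by positivity) fun i => (k i : ℝ) / 2)
  intro p
  rw [norm_hTerm]
  apply Real.exp_le_exp.mpr
  have h := hco fun i => (p i : ℝ) + (k i : ℝ) / 2
  simp only [Matrix.of_apply] at h
  nlinarith [Real.pi_pos]

lemma summable_thTerm {τ : Matrix (Fin 3) (Fin 3) ℂ} (hτ : τ ∈ Hg 3) (a b : Fin 3 → ℤ) :
    Summable fun l : Fin 3 → ℤ => thTerm τ a b l :=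
  (summable_norm_thTerm hτ a b).of_norm

lemma summable_hTerm {τ : Matrix (Fin 3) (Fin 3) ℂ} (hτ : τ ∈ Hg 3) (k : Fin 3 → ℤ) :
    Summable fun p : Fin 3 → ℤ => hTerm τ k p :=
  (summable_norm_hTerm hτ k).of_norm

/-! ### The pointwise duplication identity -/

lemma key_pointwise (τ : Matrix (Fin 3) (Fin 3) ℂ) (a b b' c : Fin 3 → ℤ)
    (h0 : b 0 + b' 0 = 2 * c 0) (h1 : b 1 + b' 1 = 2 * c 1 + 1)
    (h2 : b 2 + b' 2 = 2 * c 2 + 1) (s p q : Fin 3 → ℤ) :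
    thTerm τ a b (fun i => p i + q i + s i) * thTerm τ a b' (fun i => p i - q i - a i) =
      Complex.exp (πc * Complex.I * ∑ i, ((s i : ℂ) * ((b i : ℂ) + (b' i : ℂ)) / 2 +
          ((s i : ℂ) + (a i : ℂ)) * ((b i : ℂ) - (b' i : ℂ)) / 2)) *
        (hTerm τ s p * hTerm τ (fun i => s i + a i) q) := by
  have H0 : (b 0 : ℂ) + (b' 0 : ℂ) = 2 * (c 0 : ℂ) := by exact_mod_cast h0
  have H1 : (b 1 : ℂ) + (b' 1 : ℂ) = 2 * (c 1 : ℂ) + 1 := by exact_mod_cast h1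
  have H2 : (b 2 : ℂ) + (b' 2 : ℂ) = 2 * (c 2 : ℂ) + 1 := by exact_mod_cast h2
  unfold thTerm hTerm Qf
  simp only [← Complex.exp_add]
  rw [Complex.exp_eq_exp_iff_exists_int]
  refine ⟨(∑ i, p i * c i) + ∑ i, q i * (c i - b' i), ?_⟩
  simp only [Fin.sum_univ_three]
  push_cast
  linear_combination (πc * Complex.I * ((p 0 : ℂ) + (q 0 : ℂ))) * H0 +
    (πc * Complex.I * ((p 1 : ℂ) + (q 1 : ℂ))) * H1 +
    (πc * Complex.I * ((p 2 : ℂ) + (q 2 : ℂ))) * H2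

/-! ### Reindexing equivalence -/

def sv (s : Fin 2 × Fin 2 × Fin 2) : Fin 3 → ℤ :=
  ![((s.1 : ℕ) : ℤ), ((s.2.1 : ℕ) : ℤ), ((s.2.2 : ℕ) : ℤ)]

def pr (x : ℤ) : Fin 2 := if x % 2 = 0 then 0 else 1

lemma pr_coe (x : ℤ) : ((pr x : ℕ) : ℤ) = x % 2 := by
  unfold pr
  split_ifs with h <;> simp <;> omega

lemma pr_two_mul_add (n : ℤ) (t : Fin 2) : pr (2 * n + ((t : ℕ) : ℤ)) = t := by
  fin_cases t
  · show pr (2 * n + ((0 : ℕ) : ℤ)) = 0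
    unfold pr
    rw [if_pos (by omega)]
  · show pr (2 * n + ((1 : ℕ) : ℤ)) = 1
    unfold pr
    rw [if_neg (by omega)]

def dupEquiv (a : Fin 3 → ℤ) :
    ((Fin 2 × Fin 2 × Fin 2) × ((Fin 3 → ℤ) × (Fin 3 → ℤ))) ≃ ((Fin 3 → ℤ) × (Fin 3 → ℤ)) where
  toFun x := (fun i => x.2.1 i + x.2.2 i + sv x.1 i, fun i => x.2.1 i - x.2.2 i - a i)
  invFun lm :=
    ((pr (lm.1 0 + lm.2 0 + a 0), pr (lm.1 1 + lm.2 1 + a 1), pr (lm.1 2 + lm.2 2 + a 2)),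
      (fun i => (lm.1 i + lm.2 i + a i - (lm.1 i + lm.2 i + a i) % 2) / 2,
        fun i => (lm.1 i - lm.2 i - a i - (lm.1 i + lm.2 i + a i) % 2) / 2))
  left_inv := by
    rintro ⟨⟨s0, s1, s2⟩, p, q⟩
    simp only [Prod.mk.injEq]
    have e0 : p 0 + q 0 + sv (s0, s1, s2) 0 + (p 0 - q 0 - a 0) + a 0
        = 2 * p 0 + ((s0 : ℕ) : ℤ) := by simp [sv]; ring
    have e1 : p 1 + q 1 + sv (s0, s1, s2) 1 + (p 1 - q 1 - a 1) + a 1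
        = 2 * p 1 + ((s1 : ℕ) : ℤ) := by simp [sv]; ring
    have e2 : p 2 + q 2 + sv (s0, s1, s2) 2 + (p 2 - q 2 - a 2) + a 2
        = 2 * p 2 + ((s2 : ℕ) : ℤ) := by simp [sv]; ring
    refine ⟨⟨?_, ?_, ?_⟩, funext fun i => ?_, funext fun i => ?_⟩
    · rw [e0]; exact pr_two_mul_add _ _
    · rw [e1]; exact pr_two_mul_add _ _
    · rw [e2]; exact pr_two_mul_add _ _
    · have h0 := s0.is_lt; have h1 := s1.is_lt; have h2 := s2.is_lt
      fin_cases i <;> simp [sv] <;> omega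
    · have h0 := s0.is_lt; have h1 := s1.is_lt; have h2 := s2.is_lt
      fin_cases i <;> simp [sv] <;> omega
  right_inv := by
    rintro ⟨l, m⟩
    simp only [Prod.mk.injEq]
    constructor <;> funext i <;> fin_cases i <;> simp [sv, pr_coe] <;> omega

/-! ### The duplication formula -/

lemma dup {τ : Matrix (Fin 3) (Fin 3) ℂ} (hτ : τ ∈ Hg 3) (a b b' c : Fin 3 → ℤ)
    (h0 : b 0 + b' 0 = 2 * c 0) (h1 : b 1 + b' 1 = 2 * c 1 + 1)
    (h2 : b 2 + b' 2 = 2 * c 2 + 1) :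
    (∑' l : Fin 3 → ℤ, thTerm τ a b l) * (∑' m : Fin 3 → ℤ, thTerm τ a b' m) =
      ∑ s : Fin 2 × Fin 2 × Fin 2,
        Complex.exp (πc * Complex.I * ∑ i, ((sv s i : ℂ) * ((b i : ℂ) + (b' i : ℂ)) / 2 +
            ((sv s i : ℂ) + (a i : ℂ)) * ((b i : ℂ) - (b' i : ℂ)) / 2)) *
          (hFun τ (sv s) * hFun τ (fun i => sv s i + a i)) := by
  rw [tsum_mul_tsum_of_summable_norm (summable_norm_thTerm hτ a b) (summable_norm_thTerm hτ a b')]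
  rw [← (dupEquiv a).tsum_eq (f := fun z : (Fin 3 → ℤ) × (Fin 3 → ℤ) =>
    thTerm τ a b z.1 * thTerm τ a b' z.2)]
  have hsum : Summable fun z : (Fin 3 → ℤ) × (Fin 3 → ℤ) => thTerm τ a b z.1 * thTerm τ a b' z.2 :=
    summable_mul_of_summable_norm (summable_norm_thTerm hτ a b) (summable_norm_thTerm hτ a b')
  have hsum2 : Summable fun x : (Fin 2 × Fin 2 × Fin 2) × ((Fin 3 → ℤ) × (Fin 3 → ℤ)) =>
      thTerm τ a b ((dupEquiv a) x).1 * thTerm τ a b' ((dupEquiv a) x).2 :=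
    ((dupEquiv a).summable_iff.mpr hsum).congr fun _ => rfl
  rw [hsum2.tsum_prod' hsum2.prod_factor]
  rw [tsum_fintype]
  refine Finset.sum_congr rfl fun s _ => ?_
  have hpt : ∀ pq : (Fin 3 → ℤ) × (Fin 3 → ℤ),
      thTerm τ a b ((dupEquiv a) (s, pq)).1 * thTerm τ a b' ((dupEquiv a) (s, pq)).2 =
        Complex.exp (πc * Complex.I * ∑ i, ((sv s i : ℂ) * ((b i : ℂ) + (b' i : ℂ)) / 2 +
            ((sv s i : ℂ) + (a i : ℂ)) * ((b i : ℂ) - (b' i : ℂ)) / 2)) *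
          (hTerm τ (sv s) pq.1 * hTerm τ (fun i => sv s i + a i) pq.2) := by
    intro pq
    exact key_pointwise τ a b b' c h0 h1 h2 (sv s) pq.1 pq.2
  calc (∑' pq : (Fin 3 → ℤ) × (Fin 3 → ℤ),
          thTerm τ a b ((dupEquiv a) (s, pq)).1 * thTerm τ a b' ((dupEquiv a) (s, pq)).2)
      = ∑' pq : (Fin 3 → ℤ) × (Fin 3 → ℤ),
          Complex.exp (πc * Complex.I * ∑ i, ((sv s i : ℂ) * ((b i : ℂ) + (b' i : ℂ)) / 2 +
            ((sv s i : ℂ) + (a i : ℂ)) * ((b i : ℂ) - (b' i : ℂ)) / 2)) *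
          (hTerm τ (sv s) pq.1 * hTerm τ (fun i => sv s i + a i) pq.2) := tsum_congr hpt
    _ = Complex.exp (πc * Complex.I * ∑ i, ((sv s i : ℂ) * ((b i : ℂ) + (b' i : ℂ)) / 2 +
            ((sv s i : ℂ) + (a i : ℂ)) * ((b i : ℂ) - (b' i : ℂ)) / 2)) *
          ∑' pq : (Fin 3 → ℤ) × (Fin 3 → ℤ),
            hTerm τ (sv s) pq.1 * hTerm τ (fun i => sv s i + a i) pq.2 := tsum_mul_left
    _ = _ := by
      rw [← tsum_mul_tsum_of_summable_norm (summable_norm_hTerm hτ (sv s))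
        (summable_norm_hTerm hτ (fun i => sv s i + a i))]
      rfl

/-! ### Symmetries of `hFun` -/

lemma hTerm_neg (τ : Matrix (Fin 3) (Fin 3) ℂ) (k : Fin 3 → ℤ) {m : ℤ}
    (hm : k 1 + k 2 = 2 * m + 1) (p : Fin 3 → ℤ) :
    hTerm τ k (fun i => -p i - k i) = - hTerm τ k p := by
  have hM : ((k 1 : ℂ) + (k 2 : ℂ)) = 2 * (m : ℂ) + 1 := by exact_mod_cast hm
  have hneg : -(hTerm τ k p) = Complex.exp (πc * Complex.I) * hTerm τ k p := by
    rw [Complex.exp_pi_mul_I]; ring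
  rw [hneg]
  unfold hTerm Qf
  simp only [← Complex.exp_add]
  rw [Complex.exp_eq_exp_iff_exists_int]
  refine ⟨-(p 1 + p 2) - (m + 1), ?_⟩
  simp only [Fin.sum_univ_three]
  push_cast
  linear_combination (-πc * Complex.I) * hM

lemma hFun_vanish (τ : Matrix (Fin 3) (Fin 3) ℂ) (k : Fin 3 → ℤ) {m : ℤ}
    (hm : k 1 + k 2 = 2 * m + 1) : hFun τ k = 0 := by
  have hinv : Function.Involutive (fun p : Fin 3 → ℤ => fun i => -p i - k i) := by
    intro p; funext i; ring
  let e : (Fin 3 → ℤ) ≃ (Fin 3 → ℤ) := hinv.toPerm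
  have h1 : hFun τ k = ∑' p : Fin 3 → ℤ, hTerm τ k (e p) := (e.tsum_eq (hTerm τ k)).symm
  have h2 : (∑' p : Fin 3 → ℤ, hTerm τ k (e p)) = ∑' p : Fin 3 → ℤ, - hTerm τ k p := by
    refine tsum_congr fun p => ?_
    have he : e p = fun i => -p i - k i := rfl
    rw [he, hTerm_neg τ k hm p]
  have h3 : hFun τ k = - hFun τ k := by
    conv_lhs => rw [h1, h2, tsum_neg]
    rfl
  linear_combination (1/2 : ℂ) * h3

lemma hFun_shift (τ : Matrix (Fin 3) (Fin 3) ℂ) (k k' : Fin 3 → ℤ)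
    (h0 : k 0 = k' 0 + 2) (h1 : k 1 = k' 1) (h2 : k 2 = k' 2) :
    hFun τ k = hFun τ k' := by
  set δ : Fin 3 → ℤ := ![1, 0, 0] with hδ
  have hpt : ∀ p : Fin 3 → ℤ, hTerm τ k p = hTerm τ k' (p + δ) := by
    intro p
    unfold hTerm Qf
    have hf : (fun i => ((p i : ℂ)) + (k i : ℂ) / 2)
        = fun i => (((p + δ) i : ℤ) : ℂ) + (k' i : ℂ) / 2 := by
      funext i
      fin_cases i <;> simp [hδ, Pi.add_apply] <;> push_cast [h0, h1, h2] <;> ring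
    have hx1 : (((p + δ) 1 : ℤ) : ℂ) = (p 1 : ℂ) := by simp [hδ]
    have hx2 : (((p + δ) 2 : ℤ) : ℂ) = (p 2 : ℂ) := by simp [hδ]
    rw [hf, hx1, hx2]
  calc hFun τ k = ∑' p : Fin 3 → ℤ, hTerm τ k' (p + δ) := tsum_congr hpt
    _ = hFun τ k' := by
      have := (Equiv.addRight δ).tsum_eq (hTerm τ k')
      exact this

lemma vec_add3 (x y z u v w : ℤ) :
    (fun i => ![x, y, z] i + ![u, v, w] i) = ![x + u, y + v, z + w] := by
  funext i; fin_cases i <;> simp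

lemma rmn_eq (μ ν : ℤ) (τ : Matrix (Fin 3) (Fin 3) ℂ) : rmn μ ν τ =
    (thetaNull 3 ![μ, 0, 0] ![ν, 0, 0] τ * thetaNull 3 ![μ, 0, 0] ![ν, 1, 1] τ) *
    (thetaNull 3 ![μ, 0, 0] ![ν, 0, 1] τ * thetaNull 3 ![μ, 0, 0] ![ν, 1, 0] τ) := by
  unfold rmn
  simp only [Fin.prod_univ_two]
  norm_num
  ring

end Rel6

/-- Relation (6): `r₀₀ = r₀₁ + r₁₀` on `ℍ₃`. -/
theorem statement_1 (τ : Matrix (Fin 3) (Fin 3) ℂ) (hτ : τ ∈ Hg 3) :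
    rmn 0 0 τ = rmn 0 1 τ + rmn 1 0 τ := by
  open Rel6 in
  rw [rmn_eq 0 0 τ, rmn_eq 0 1 τ, rmn_eq 1 0 τ]
  simp only [Rel6.thetaNull_eq]
  rw [Rel6.dup hτ ![0,0,0] ![0,0,0] ![0,1,1] ![0,0,0] (by norm_num [Matrix.cons_val_two]) (by norm_num [Matrix.cons_val_two]) (by norm_num [Matrix.cons_val_two]),
      Rel6.dup hτ ![0,0,0] ![0,0,1] ![0,1,0] ![0,0,0] (by norm_num [Matrix.cons_val_two]) (by norm_num [Matrix.cons_val_two]) (by norm_num [Matrix.cons_val_two]),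
      Rel6.dup hτ ![0,0,0] ![1,0,0] ![1,1,1] ![1,0,0] (by norm_num [Matrix.cons_val_two]) (by norm_num [Matrix.cons_val_two]) (by norm_num [Matrix.cons_val_two]),
      Rel6.dup hτ ![0,0,0] ![1,0,1] ![1,1,0] ![1,0,0] (by norm_num [Matrix.cons_val_two]) (by norm_num [Matrix.cons_val_two]) (by norm_num [Matrix.cons_val_two]),
      Rel6.dup hτ ![1,0,0] ![0,0,0] ![0,1,1] ![0,0,0] (by norm_num [Matrix.cons_val_two]) (by norm_num [Matrix.cons_val_two]) (by norm_num [Matrix.cons_val_two]),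
      Rel6.dup hτ ![1,0,0] ![0,0,1] ![0,1,0] ![0,0,0] (by norm_num [Matrix.cons_val_two]) (by norm_num [Matrix.cons_val_two]) (by norm_num [Matrix.cons_val_two])]
  simp only [Fintype.sum_prod_type, Fin.sum_univ_two, Fin.sum_univ_three, Rel6.sv]
  norm_num [Rel6.vec_add3, Matrix.cons_val_two]
  have v1 : Rel6.hFun τ ![0,0,1] = 0 := Rel6.hFun_vanish τ _ (m := 0) (by norm_num [Matrix.cons_val_two])
  have v2 : Rel6.hFun τ ![0,1,0] = 0 := Rel6.hFun_vanish τ _ (m := 0) (by norm_num [Matrix.cons_val_two])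
  have v3 : Rel6.hFun τ ![1,0,1] = 0 := Rel6.hFun_vanish τ _ (m := 0) (by norm_num [Matrix.cons_val_two])
  have v4 : Rel6.hFun τ ![1,1,0] = 0 := Rel6.hFun_vanish τ _ (m := 0) (by norm_num [Matrix.cons_val_two])
  have v5 : Rel6.hFun τ ![2,0,1] = 0 := Rel6.hFun_vanish τ _ (m := 0) (by norm_num [Matrix.cons_val_two])
  have v6 : Rel6.hFun τ ![2,1,0] = 0 := Rel6.hFun_vanish τ _ (m := 0) (by norm_num [Matrix.cons_val_two])
  have s1 : Rel6.hFun τ ![2,0,0] = Rel6.hFun τ ![0,0,0] :=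
    Rel6.hFun_shift τ _ _ (by norm_num [Matrix.cons_val_two]) (by norm_num [Matrix.cons_val_two]) (by norm_num [Matrix.cons_val_two])
  have s2 : Rel6.hFun τ ![2,1,1] = Rel6.hFun τ ![0,1,1] :=
    Rel6.hFun_shift τ _ _ (by norm_num [Matrix.cons_val_two]) (by norm_num [Matrix.cons_val_two]) (by norm_num [Matrix.cons_val_two])
  have e2 : Complex.exp ((Real.pi : ℂ) * Complex.I * 2) = 1 := by
    rw [show (Real.pi : ℂ) * Complex.I * 2 = 2 * (Real.pi : ℂ) * Complex.I by ring]
    exact Complex.exp_two_pi_mul_I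
  rw [v1, v2, v3, v4, v5, v6, s1, s2, e2]
  ring


end
end

section
/- χ₁₈ vanishes to order at least 6 along the locus of decomposable period matrices: for every τ ∈ ℍ₃ with τ₁₃ = τ₂₃ = 0 (the image of ℍ₂×ℍ₁ in ℍ₃) and all nonnegative integers p, q with p + q ≤ 5, the partial derivative ∂^{p+q}χ₁₈/∂τ₁₃^p∂τ₂₃^q vanishes at τ. -/
open scoped BigOperators
open Complex Matrix Filter

noncomputable section

attribute [local instance] Matrix.normedAddCommGroup Matrix.normedSpace

namespace Chi18V

abbrev M3 := Matrix (Fin 3) (Fin 3) ℂ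

def Sm (i j : Fin 3) : M3 := Matrix.single i j 1 + Matrix.single j i 1

lemma mdOp_iterate (a b : Fin 3) (n : ℕ) (f : M3 → ℂ) (σ : M3) :
    (mdOp a b)^[n] f σ = iteratedDeriv n (fun w : ℂ => f (σ + w • Sm a b)) 0 := by
  induction n generalizing σ with
  | zero => simp [Sm]
  | succ n IH =>
    rw [Function.iterate_succ_apply', mdOp]
    have h1 : ∀ w : ℂ, (mdOp a b)^[n] f (σ + w • (Matrix.single a b (1:ℂ) + Matrix.single b a 1))
        = iteratedDeriv n (fun w' : ℂ => f (σ + w' • Sm a b)) w := by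
      intro w
      rw [IH]
      have : (fun w' : ℂ => f (σ + w • Sm a b + w' • Sm a b))
          = fun w' : ℂ => f (σ + (w + w') • Sm a b) := by
        funext w'
        rw [add_smul, add_assoc]
      rw [show (σ + w • (Matrix.single a b (1:ℂ) + Matrix.single b a 1)) = σ + w • Sm a b from rfl]
      rw [this]
      exact (congrFun (iteratedDeriv_comp_const_add n (fun t : ℂ => f (σ + t • Sm a b)) w) 0).trans
        (by rw [add_zero])
    simp only [h1]
    rw [iteratedDeriv_succ]

def xv (a l : Fin 3 → ℤ) (i : Fin 3) : ℝ := (l i : ℝ) + (a i : ℝ) / 2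

def cv (a l : Fin 3 → ℤ) (i : Fin 3) : ℂ := ((xv a l i : ℝ) : ℂ)

lemma cv_eq (a l : Fin 3 → ℤ) (i : Fin 3) : cv a l i = (l i : ℂ) + (a i : ℂ) / 2 := by
  unfold cv xv; push_cast; ring

def Qf (τ : M3) (a l : Fin 3 → ℤ) : ℂ := ∑ i, ∑ j, cv a l i * τ i j * cv a l j

def bf (a l : Fin 3 → ℤ) : ℂ := 2 * (Real.pi : ℂ) * Complex.I * (cv a l 0 * cv a l 2)

def gf (a l : Fin 3 → ℤ) : ℂ := 2 * (Real.pi : ℂ) * Complex.I * (cv a l 1 * cv a l 2)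

def Ef (a b l : Fin 3 → ℤ) : ℂ :=
  Complex.exp (2 * (Real.pi : ℂ) * Complex.I * ∑ i, cv a l i * ((b i : ℂ) / 2))

def term (τ : M3) (a b : Fin 3 → ℤ) (m n : ℕ) (u v : ℂ) (l : Fin 3 → ℤ) : ℂ :=
  bf a l ^ m * gf a l ^ n *
    Complex.exp ((Real.pi : ℂ) * Complex.I * Qf τ a l + bf a l * u + gf a l * v) * Ef a b l

def T (τ : M3) (a b : Fin 3 → ℤ) (m n : ℕ) (u v : ℂ) : ℂ := ∑' l, term τ a b m n u v l

/-- vanishing of odd theta-type sums -/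
lemma T_zero (τ : M3) (h02 : τ 0 2 = 0) (h12 : τ 1 2 = 0) (h20 : τ 2 0 = 0) (h21 : τ 2 1 = 0)
    (a b : Fin 3 → ℤ) (ha2 : a 2 = 1) (hb2 : b 2 = 1) (m n : ℕ) (hmn : Even (m + n)) :
    T τ a b m n 0 0 = 0 := by
  have hInv : Function.Involutive (fun l : Fin 3 → ℤ => Function.update l 2 (-(l 2) - 1)) := by
    intro l
    funext i
    by_cases h : i = 2 <;> simp [Function.update_apply, h]
  set e : (Fin 3 → ℤ) ≃ (Fin 3 → ℤ) := hInv.toPerm _ with he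
  have key : ∀ l, term τ a b m n 0 0 (e l) = - term τ a b m n 0 0 l := by
    intro l
    have hc0 : cv a (e l) 0 = cv a l 0 := by
      simp [he, Function.Involutive.coe_toPerm, cv, xv, Function.update_apply]
    have hc1 : cv a (e l) 1 = cv a l 1 := by
      simp [he, Function.Involutive.coe_toPerm, cv, xv, Function.update_apply]
    have hc2 : cv a (e l) 2 = - cv a l 2 := by
      simp only [he, Function.Involutive.coe_toPerm, cv, xv, Function.update_apply, if_pos rfl]
      rw [ha2]
      push_cast
      ring
    have hb : bf a (e l) = - bf a l := by unfold bf; rw [hc0, hc2]; ring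
    have hg : gf a (e l) = - gf a l := by unfold gf; rw [hc1, hc2]; ring
    have hQ : Qf τ a (e l) = Qf τ a l := by
      unfold Qf
      simp only [Fin.sum_univ_three]
      rw [hc0, hc1, hc2, h02, h12, h20, h21]
      ring
    have hE : Ef a b (e l) = - Ef a b l := by
      unfold Ef
      rw [Fin.sum_univ_three, Fin.sum_univ_three, hc0, hc1, hc2]
      have hb2' : (b 2 : ℂ) = 1 := by rw [hb2]; norm_num
      have hc2' : cv a l 2 = (l 2 : ℂ) + 1 / 2 := by rw [cv_eq, ha2]; norm_num
      have hexp : 2 * (Real.pi : ℂ) * Complex.I *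
            (cv a l 0 * ((b 0 : ℂ)/2) + cv a l 1 * ((b 1 : ℂ)/2) + (-(cv a l 2)) * ((b 2 : ℂ)/2))
          = 2 * (Real.pi : ℂ) * Complex.I *
            (cv a l 0 * ((b 0 : ℂ)/2) + cv a l 1 * ((b 1 : ℂ)/2) + cv a l 2 * ((b 2 : ℂ)/2))
            + ((-(l 2) : ℤ) : ℂ) * (2 * (Real.pi : ℂ) * Complex.I) + (-((Real.pi : ℂ) * Complex.I)) := by
        rw [hb2', hc2']
        push_cast
        ring
      rw [hexp, Complex.exp_add, Complex.exp_add, Complex.exp_int_mul_two_pi_mul_I]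
      have : Complex.exp (-((Real.pi : ℂ) * Complex.I)) = -1 := by
        rw [Complex.exp_neg, Complex.exp_pi_mul_I]
        norm_num
      rw [this]
      ring
    unfold term
    simp only [mul_zero, add_zero]
    rw [hb, hg, hQ, hE]
    have hpow : (-bf a l) ^ m * (-gf a l) ^ n = bf a l ^ m * gf a l ^ n := by
      rw [neg_pow (bf a l), neg_pow (gf a l)]
      have h1 : ((-1 : ℂ)) ^ m * ((-1 : ℂ)) ^ n = 1 := by
        rw [← pow_add, Even.neg_one_pow hmn]
      calc (-1:ℂ)^m * bf a l ^ m * ((-1:ℂ)^n * gf a l ^ n)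
          = ((-1:ℂ)^m * (-1:ℂ)^n) * (bf a l ^ m * gf a l ^ n) := by ring
        _ = bf a l ^ m * gf a l ^ n := by rw [h1, one_mul]
    rw [hpow]
    ring
  have h2 : T τ a b m n 0 0 = - T τ a b m n 0 0 := by
    conv_lhs => rw [T, ← e.tsum_eq (term τ a b m n 0 0)]
    rw [tsum_congr key, tsum_neg]
    rfl
  have h3 : (2:ℂ) * T τ a b m n 0 0 = 0 := by linear_combination h2
  exact (mul_eq_zero.mp h3).resolve_left two_ne_zero

set_option maxHeartbeats 1000000


lemma coercive {A : Matrix (Fin 3) (Fin 3) ℝ} (hA : A.PosDef) :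
    ∃ c : ℝ, 0 < c ∧ ∀ x : Fin 3 → ℝ,
      c * (x 0 ^ 2 + x 1 ^ 2 + x 2 ^ 2) ≤ ∑ i, ∑ j, x i * A i j * x j := by
  classical
  have hcoord : ∀ i : Fin 3, Continuous fun x : EuclideanSpace ℝ (Fin 3) => x i :=
    fun i => (EuclideanSpace.proj i : EuclideanSpace ℝ (Fin 3) →L[ℝ] ℝ).continuous
  set f : EuclideanSpace ℝ (Fin 3) → ℝ := fun x => ∑ i, ∑ j, x i * A i j * x j with hf
  have hfc : Continuous f := by
    apply continuous_finset_sum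
    intro i _
    apply continuous_finset_sum
    intro j _
    exact ((hcoord i).mul continuous_const).mul (hcoord j)
  have hfpos : ∀ x : EuclideanSpace ℝ (Fin 3), x ≠ 0 → 0 < f x := by
    intro x hx
    have h := hA.dotProduct_mulVec_pos (x := WithLp.ofLp x) (by simpa using hx)
    calc (0:ℝ) < (WithLp.ofLp x) ⬝ᵥ A.mulVec (WithLp.ofLp x) := by simpa only [star_trivial] using h
    _ = f x := by
      simp only [dotProduct, Matrix.mulVec, hf]
      exact Finset.sum_congr rfl fun i _ => by rw [Finset.mul_sum]; exact Finset.sum_congr rfl fun j _ => by ring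
  have hsph : IsCompact (Metric.sphere (0 : EuclideanSpace ℝ (Fin 3)) 1) := isCompact_sphere _ _
  have hne : (Metric.sphere (0 : EuclideanSpace ℝ (Fin 3)) 1).Nonempty := by
    refine ⟨EuclideanSpace.single 0 1, ?_⟩
    simp [mem_sphere_zero_iff_norm, EuclideanSpace.norm_single]
  obtain ⟨x₀, hx₀, hmin⟩ := hsph.exists_isMinOn hne hfc.continuousOn
  have hx₀ne : x₀ ≠ 0 := by
    intro h0
    rw [mem_sphere_zero_iff_norm, h0, norm_zero] at hx₀
    norm_num at hx₀
  refine ⟨f x₀, hfpos x₀ hx₀ne, ?_⟩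
  intro x
  set y : EuclideanSpace ℝ (Fin 3) := (WithLp.equiv 2 (Fin 3 → ℝ)).symm x with hy
  have hyx : ∀ i, y i = x i := fun i => rfl
  have hfy : f y = ∑ i, ∑ j, x i * A i j * x j := rfl
  by_cases h0 : y = 0
  · have hx0 : ∀ i, x i = 0 := fun i => by rw [← hyx i, h0]; rfl
    rw [← hfy, h0, hx0 0, hx0 1, hx0 2]
    simp [hf]
  · set t : ℝ := ‖y‖ with hts
    have ht : 0 < t := norm_pos_iff.mpr h0
    set z : EuclideanSpace ℝ (Fin 3) := t⁻¹ • y with hz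
    have hzs : z ∈ Metric.sphere (0 : EuclideanSpace ℝ (Fin 3)) 1 := by
      rw [mem_sphere_zero_iff_norm, hz, norm_smul, norm_inv, Real.norm_eq_abs,
        abs_of_pos ht, ← hts, inv_mul_cancel₀ ht.ne']
    have hmz : f x₀ ≤ f z := hmin hzs
    have hzi : ∀ i, z i = t⁻¹ * y i := fun i => by
      rw [hz, PiLp.smul_apply, smul_eq_mul]
    have hfz : f z = t⁻¹ ^ 2 * f y := by
      simp only [hf, Finset.mul_sum]
      refine Finset.sum_congr rfl fun i _ => ?_
      refine Finset.sum_congr rfl fun j _ => ?_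
      rw [hzi i, hzi j]
      ring
    have hnorm : t ^ 2 = x 0 ^ 2 + x 1 ^ 2 + x 2 ^ 2 := by
      have h1 : t = Real.sqrt (∑ i, ‖y i‖ ^ 2) := EuclideanSpace.norm_eq y
      have h2 : (0:ℝ) ≤ ∑ i, ‖y i‖ ^ 2 := Finset.sum_nonneg fun i _ => sq_nonneg _
      rw [h1, Real.sq_sqrt h2, Fin.sum_univ_three]
      simp only [hyx, Real.norm_eq_abs, _root_.sq_abs]
    have hmain : f x₀ * t ^ 2 ≤ f y := by
      calc f x₀ * t ^ 2 ≤ (t⁻¹ ^ 2 * f y) * t ^ 2 :=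
            mul_le_mul_of_nonneg_right (hfz ▸ hmz) (sq_nonneg t)
      _ = f y := by field_simp
    rw [← hnorm, ← hfy]
    linarith

lemma key_bound (B d : ℝ) (hd : 0 < d) (k : ℕ) :
    ∃ C : ℝ, 0 ≤ C ∧ ∀ s : ℝ, 0 ≤ s →
      (B * s ^ 2) ^ k * Real.exp (-(d * s ^ 2)) ≤ C * Real.exp (-s) := by
  refine ⟨|B| ^ k * ((2 / d) ^ k * (Nat.factorial k : ℝ)) * Real.exp (1 / (2 * d)), by positivity, ?_⟩
  intro s hs
  have h1 : (B * s ^ 2) ^ k ≤ |B| ^ k * (s ^ 2) ^ k := by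
    calc (B * s ^ 2) ^ k ≤ |(B * s ^ 2) ^ k| := le_abs_self _
    _ = |B| ^ k * (s ^ 2) ^ k := by
      rw [_root_.abs_pow, _root_.abs_mul, _root_.abs_of_nonneg (sq_nonneg s), mul_pow]
  have h2 : (s ^ 2) ^ k ≤ (2 / d) ^ k * (Nat.factorial k : ℝ) * Real.exp (d / 2 * s ^ 2) := by
    have h3 := Real.pow_div_factorial_le_exp (x := d / 2 * s ^ 2) (by positivity) k
    have h4 : (d / 2 * s ^ 2) ^ k = (d / 2) ^ k * (s ^ 2) ^ k := by rw [mul_pow]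
    rw [h4] at h3
    have h5 : (0:ℝ) < (d / 2) ^ k := by positivity
    have h6 : (0:ℝ) < (Nat.factorial k : ℝ) := by positivity
    rw [div_le_iff₀ h6] at h3
    have h7 : (2 / d) ^ k * (d / 2) ^ k = 1 := by
      rw [← mul_pow]
      field_simp
      exact one_pow k
    calc (s ^ 2) ^ k = (2 / d) ^ k * ((d / 2) ^ k * (s ^ 2) ^ k) := by
          rw [← mul_assoc, h7, one_mul]
    _ ≤ (2 / d) ^ k * (Real.exp (d / 2 * s ^ 2) * (Nat.factorial k : ℝ)) := by
          apply mul_le_mul_of_nonneg_left h3 (by positivity)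
    _ = (2 / d) ^ k * (Nat.factorial k : ℝ) * Real.exp (d / 2 * s ^ 2) := by ring
  have h8 : Real.exp (d / 2 * s ^ 2) * Real.exp (-(d * s ^ 2)) ≤ Real.exp (1 / (2 * d)) * Real.exp (-s) := by
    rw [← Real.exp_add, ← Real.exp_add]
    apply Real.exp_le_exp.mpr
    have h2d : (0:ℝ) < 2 * d := by positivity
    have hkey : 1/(2*d) + -s - (d/2*s^2 + -(d*s^2)) = (d*s-1)^2 / (2*d) := by
      field_simp
      ring
    linarith [div_nonneg (sq_nonneg (d*s-1)) h2d.le, hkey]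
  calc (B * s ^ 2) ^ k * Real.exp (-(d * s ^ 2))
      ≤ (|B| ^ k * ((2 / d) ^ k * (Nat.factorial k : ℝ) * Real.exp (d / 2 * s ^ 2))) * Real.exp (-(d * s ^ 2)) := by
        apply mul_le_mul_of_nonneg_right _ (Real.exp_nonneg _)
        calc (B * s ^ 2) ^ k ≤ |B| ^ k * (s ^ 2) ^ k := h1
        _ ≤ |B| ^ k * ((2 / d) ^ k * (Nat.factorial k : ℝ) * Real.exp (d / 2 * s ^ 2)) := by
            apply mul_le_mul_of_nonneg_left h2 (by positivity)
  _ = (|B| ^ k * ((2 / d) ^ k * (Nat.factorial k : ℝ))) * (Real.exp (d / 2 * s ^ 2) * Real.exp (-(d * s ^ 2))) := by ring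
  _ ≤ (|B| ^ k * ((2 / d) ^ k * (Nat.factorial k : ℝ))) * (Real.exp (1 / (2 * d)) * Real.exp (-s)) := by
        apply mul_le_mul_of_nonneg_left h8 (by positivity)
  _ = |B| ^ k * ((2 / d) ^ k * (Nat.factorial k : ℝ)) * Real.exp (1 / (2 * d)) * Real.exp (-s) := by ring

lemma summable_exp_int : Summable (fun n : ℤ => Real.exp (-|(n : ℝ)|)) := by
  have hgeo : Summable (fun n : ℕ => Real.exp (-1) ^ n) :=
    summable_geometric_of_lt_one (Real.exp_nonneg _) (by
      have h := Real.exp_lt_exp.mpr (show (-1:ℝ) < 0 by norm_num)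
      rwa [Real.exp_zero] at h)
  have hnat : Summable (fun n : ℕ => Real.exp (-|((n : ℤ) : ℝ)|)) := by
    refine hgeo.congr fun n => ?_
    rw [← Real.exp_nat_mul]
    congr 1
    push_cast
    rw [_root_.abs_of_nonneg (by positivity : (0:ℝ) ≤ (n:ℝ))]
    ring
  apply Summable.of_nat_of_neg hnat
  refine hnat.congr fun n => ?_
  congr 2
  push_cast
  rw [abs_neg]

lemma summable_exp_pi : Summable (fun l : Fin 3 → ℤ =>
    Real.exp (-|(l 0 : ℝ)|) * (Real.exp (-|(l 1 : ℝ)|) * Real.exp (-|(l 2 : ℝ)|))) := by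
  have h2 : Summable (fun p : ℤ × ℤ => Real.exp (-|(p.1 : ℝ)|) * Real.exp (-|(p.2 : ℝ)|)) :=
    Summable.mul_of_nonneg summable_exp_int summable_exp_int
      (fun n => Real.exp_nonneg _) (fun n => Real.exp_nonneg _)
  have h3 : Summable (fun p : ℤ × ℤ × ℤ =>
      Real.exp (-|(p.1 : ℝ)|) * (Real.exp (-|(p.2.1 : ℝ)|) * Real.exp (-|(p.2.2 : ℝ)|))) :=
    Summable.mul_of_nonneg summable_exp_int h2 (fun n => Real.exp_nonneg _)
      (fun p => mul_nonneg (Real.exp_nonneg _) (Real.exp_nonneg _))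
  set e : (Fin 3 → ℤ) ≃ ℤ × ℤ × ℤ :=
    (Fin.consEquiv (fun _ => ℤ)).symm.trans (Equiv.prodCongr (Equiv.refl ℤ)
      ((Fin.consEquiv (fun _ => ℤ)).symm.trans (Equiv.prodCongr (Equiv.refl ℤ)
        (Equiv.funUnique (Fin 1) ℤ)))) with he
  have := (Equiv.summable_iff e).mpr h3
  refine this.congr fun l => ?_
  rfl



def Xr (a l : Fin 3 → ℤ) : ℝ := xv a l 0 ^ 2 + xv a l 1 ^ 2 + xv a l 2 ^ 2

lemma Qf_im (τ : M3) (a l : Fin 3 → ℤ) :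
    (Qf τ a l).im = ∑ i, ∑ j, xv a l i * (τ i j).im * xv a l j := by
  unfold Qf cv
  simp only [Fin.sum_univ_three, Complex.add_im, Complex.mul_im, Complex.mul_re,
    Complex.ofReal_re, Complex.ofReal_im]
  ring

lemma norm_Ef (a b l : Fin 3 → ℤ) : ‖Ef a b l‖ = 1 := by
  unfold Ef
  rw [Complex.norm_exp]
  have hsum : ∑ i, cv a l i * ((b i : ℂ) / 2) = ((∑ i, xv a l i * ((b i : ℝ) / 2) : ℝ) : ℂ) := by
    unfold cv
    rw [Fin.sum_univ_three, Fin.sum_univ_three]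
    push_cast
    ring
  rw [hsum]
  have : (2 * (Real.pi : ℂ) * Complex.I * ((∑ i, xv a l i * ((b i : ℝ) / 2) : ℝ) : ℂ)).re = 0 := by
    simp [Complex.mul_re, Complex.mul_im]
  rw [this, Real.exp_zero]

lemma norm_bf (a l : Fin 3 → ℤ) : ‖bf a l‖ = 2 * Real.pi * |xv a l 0 * xv a l 2| := by
  unfold bf cv
  rw [show 2 * (Real.pi : ℂ) * Complex.I * (((xv a l 0 : ℝ) : ℂ) * ((xv a l 2 : ℝ) : ℂ))
      = ((2 * Real.pi * (xv a l 0 * xv a l 2) : ℝ) : ℂ) * Complex.I from by push_cast; ring]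
  rw [norm_mul, Complex.norm_real, Complex.norm_I, mul_one, Real.norm_eq_abs,
    _root_.abs_mul, _root_.abs_mul, _root_.abs_of_nonneg (by norm_num : (0:ℝ) ≤ 2),
    _root_.abs_of_nonneg Real.pi_pos.le]

lemma norm_gf (a l : Fin 3 → ℤ) : ‖gf a l‖ = 2 * Real.pi * |xv a l 1 * xv a l 2| := by
  unfold gf cv
  rw [show 2 * (Real.pi : ℂ) * Complex.I * (((xv a l 1 : ℝ) : ℂ) * ((xv a l 2 : ℝ) : ℂ))
      = ((2 * Real.pi * (xv a l 1 * xv a l 2) : ℝ) : ℂ) * Complex.I from by push_cast; ring]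
  rw [norm_mul, Complex.norm_real, Complex.norm_I, mul_one, Real.norm_eq_abs,
    _root_.abs_mul, _root_.abs_mul, _root_.abs_of_nonneg (by norm_num : (0:ℝ) ≤ 2),
    _root_.abs_of_nonneg Real.pi_pos.le]

lemma norm_term_le (τ : M3) (c : ℝ)
    (hc : ∀ x : Fin 3 → ℝ, c * (x 0 ^ 2 + x 1 ^ 2 + x 2 ^ 2) ≤ ∑ i, ∑ j, x i * (τ i j).im * x j)
    (a b : Fin 3 → ℤ) (m n : ℕ) (u v : ℂ) (hu : ‖u‖ ≤ c / 4) (hv : ‖v‖ ≤ c / 4)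
    (l : Fin 3 → ℤ) :
    ‖term τ a b m n u v l‖ ≤
      (Real.pi * Xr a l) ^ (m + n) * Real.exp (-(Real.pi * c / 2) * Xr a l) := by
  have hX0 : 0 ≤ Xr a l := by unfold Xr; positivity
  have hc4 : 0 ≤ c / 4 := le_trans (norm_nonneg u) hu
  have hbf : ‖bf a l‖ ≤ Real.pi * Xr a l := by
    rw [norm_bf]
    unfold Xr
    nlinarith [sq_nonneg (|xv a l 0| - |xv a l 2|), _root_.sq_abs (xv a l 0),
      _root_.sq_abs (xv a l 2), Real.pi_pos, sq_nonneg (xv a l 1),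
      _root_.abs_mul (xv a l 0) (xv a l 2), abs_nonneg (xv a l 0), abs_nonneg (xv a l 2),
      abs_nonneg (xv a l 0 * xv a l 2)]
  have hgf : ‖gf a l‖ ≤ Real.pi * Xr a l := by
    rw [norm_gf]
    unfold Xr
    nlinarith [sq_nonneg (|xv a l 1| - |xv a l 2|), _root_.sq_abs (xv a l 1),
      _root_.sq_abs (xv a l 2), Real.pi_pos, sq_nonneg (xv a l 0),
      _root_.abs_mul (xv a l 1) (xv a l 2), abs_nonneg (xv a l 1), abs_nonneg (xv a l 2),
      abs_nonneg (xv a l 1 * xv a l 2)]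
  have hre : ((Real.pi : ℂ) * Complex.I * Qf τ a l + bf a l * u + gf a l * v).re
      ≤ -(Real.pi * c / 2) * Xr a l := by
    have h1 : ((Real.pi : ℂ) * Complex.I * Qf τ a l).re = -(Real.pi * (Qf τ a l).im) := by
      simp [Complex.mul_re, Complex.mul_im]
    have h2 : c * Xr a l ≤ (Qf τ a l).im := by
      rw [Qf_im]
      exact hc (xv a l)
    have h3 : (bf a l * u).re ≤ Real.pi * Xr a l * (c / 4) := by
      calc (bf a l * u).re ≤ ‖bf a l * u‖ := Complex.re_le_norm _
      _ = ‖bf a l‖ * ‖u‖ := norm_mul _ _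
      _ ≤ Real.pi * Xr a l * (c / 4) :=
        mul_le_mul hbf hu (norm_nonneg _) (by positivity)
    have h4 : (gf a l * v).re ≤ Real.pi * Xr a l * (c / 4) := by
      calc (gf a l * v).re ≤ ‖gf a l * v‖ := Complex.re_le_norm _
      _ = ‖gf a l‖ * ‖v‖ := norm_mul _ _
      _ ≤ Real.pi * Xr a l * (c / 4) :=
        mul_le_mul hgf hv (norm_nonneg _) (by positivity)
    rw [Complex.add_re, Complex.add_re, h1]
    nlinarith [mul_le_mul_of_nonneg_left h2 Real.pi_pos.le]
  unfold term
  rw [norm_mul, norm_mul, norm_mul, norm_pow, norm_pow, norm_Ef, mul_one,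
    show ‖Complex.exp ((Real.pi : ℂ) * Complex.I * Qf τ a l + bf a l * u + gf a l * v)‖
      = Real.exp (((Real.pi : ℂ) * Complex.I * Qf τ a l + bf a l * u + gf a l * v).re) from by
        rw [Complex.norm_exp]]
  calc ‖bf a l‖ ^ m * ‖gf a l‖ ^ n *
        Real.exp (((Real.pi : ℂ) * Complex.I * Qf τ a l + bf a l * u + gf a l * v).re)
      ≤ (Real.pi * Xr a l) ^ m * (Real.pi * Xr a l) ^ n *
          Real.exp (-(Real.pi * c / 2) * Xr a l) := by
        apply mul_le_mul
        · exact mul_le_mul (pow_le_pow_left₀ (norm_nonneg _) hbf m)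
            (pow_le_pow_left₀ (norm_nonneg _) hgf n) (by positivity) (by positivity)
        · exact Real.exp_le_exp.mpr hre
        · positivity
        · positivity
  _ = (Real.pi * Xr a l) ^ (m + n) * Real.exp (-(Real.pi * c / 2) * Xr a l) := by
        rw [pow_add]

lemma summable_majorant (c : ℝ) (hc0 : 0 < c) (a : Fin 3 → ℤ) (ha : ∀ i, |(a i : ℝ)| ≤ 1)
    (k : ℕ) :
    Summable (fun l : Fin 3 → ℤ =>
      (Real.pi * Xr a l) ^ k * Real.exp (-(Real.pi * c / 2) * Xr a l)) := by
  obtain ⟨C, hC0, hC⟩ := key_bound Real.pi (Real.pi * c / 6) (by positivity) k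
  set s : (Fin 3 → ℤ) → ℝ := fun l => |xv a l 0| + |xv a l 1| + |xv a l 2| with hs
  have hsl : ∀ l, 0 ≤ s l := fun l => by positivity
  have hbound : ∀ l, (Real.pi * Xr a l) ^ k * Real.exp (-(Real.pi * c / 2) * Xr a l)
      ≤ C * Real.exp (-(s l)) := by
    intro l
    have hX0 : 0 ≤ Xr a l := by unfold Xr; positivity
    have hseq : s l = |xv a l 0| + |xv a l 1| + |xv a l 2| := rfl
    have hX : Xr a l ≤ (s l) ^ 2 := by
      unfold Xr
      rw [hseq]
      nlinarith [_root_.sq_abs (xv a l 0), _root_.sq_abs (xv a l 1), _root_.sq_abs (xv a l 2),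
        mul_nonneg (abs_nonneg (xv a l 0)) (abs_nonneg (xv a l 1)),
        mul_nonneg (abs_nonneg (xv a l 0)) (abs_nonneg (xv a l 2)),
        mul_nonneg (abs_nonneg (xv a l 1)) (abs_nonneg (xv a l 2))]
    have hX3 : (s l) ^ 2 ≤ 3 * Xr a l := by
      unfold Xr
      rw [hseq]
      nlinarith [sq_nonneg (|xv a l 0| - |xv a l 1|), sq_nonneg (|xv a l 0| - |xv a l 2|),
        sq_nonneg (|xv a l 1| - |xv a l 2|), _root_.sq_abs (xv a l 0),
        _root_.sq_abs (xv a l 1), _root_.sq_abs (xv a l 2)]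
    calc (Real.pi * Xr a l) ^ k * Real.exp (-(Real.pi * c / 2) * Xr a l)
        ≤ (Real.pi * (s l) ^ 2) ^ k * Real.exp (-(Real.pi * c / 6 * (s l) ^ 2)) := by
          apply mul_le_mul
          · exact pow_le_pow_left₀ (by positivity)
              (mul_le_mul_of_nonneg_left hX Real.pi_pos.le) k
          · apply Real.exp_le_exp.mpr
            nlinarith [mul_le_mul_of_nonneg_left hX3
              (show (0:ℝ) ≤ Real.pi * c / 6 by positivity)]
          · positivity
          · positivity
    _ ≤ C * Real.exp (-(s l)) := hC (s l) (hsl l)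
  have hcmp : ∀ l : Fin 3 → ℤ, C * Real.exp (-(s l)) ≤ (C * Real.exp (3 / 2)) *
      (Real.exp (-|(l 0 : ℝ)|) * (Real.exp (-|(l 1 : ℝ)|) * Real.exp (-|(l 2 : ℝ)|))) := by
    intro l
    have habs : ∀ i : Fin 3, |(l i : ℝ)| ≤ |xv a l i| + 1 / 2 := by
      intro i
      have h1 : (l i : ℝ) = xv a l i - (a i : ℝ) / 2 := by unfold xv; ring
      have h2 : |(a i : ℝ) / 2| ≤ 1 / 2 := by
        rw [abs_div]
        have := ha i
        have h3 : |(2:ℝ)| = 2 := by norm_num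
        rw [h3]
        linarith
      rw [h1, sub_eq_add_neg]
      calc |xv a l i + -((a i : ℝ) / 2)| ≤ |xv a l i| + |-((a i : ℝ) / 2)| := abs_add_le _ _
      _ ≤ |xv a l i| + 1 / 2 := by rw [abs_neg]; linarith
    have hexp : Real.exp (-(s l)) ≤ Real.exp (3 / 2) *
        (Real.exp (-|(l 0 : ℝ)|) * (Real.exp (-|(l 1 : ℝ)|) * Real.exp (-|(l 2 : ℝ)|))) := by
      rw [← Real.exp_add, ← Real.exp_add, ← Real.exp_add]
      apply Real.exp_le_exp.mpr
      have h0 := habs 0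
      have h1 := habs 1
      have h2 := habs 2
      have hseq : s l = |xv a l 0| + |xv a l 1| + |xv a l 2| := rfl
      rw [hseq]
      linarith
    calc C * Real.exp (-(s l)) ≤ C * (Real.exp (3 / 2) *
        (Real.exp (-|(l 0 : ℝ)|) * (Real.exp (-|(l 1 : ℝ)|) * Real.exp (-|(l 2 : ℝ)|)))) :=
          mul_le_mul_of_nonneg_left hexp hC0
    _ = (C * Real.exp (3 / 2)) *
        (Real.exp (-|(l 0 : ℝ)|) * (Real.exp (-|(l 1 : ℝ)|) * Real.exp (-|(l 2 : ℝ)|))) := by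
          ring
  apply Summable.of_nonneg_of_le (fun l => mul_nonneg
    (pow_nonneg (mul_nonneg Real.pi_pos.le (by unfold Xr; positivity)) k) (Real.exp_nonneg _))
    (fun l => (hbound l).trans (hcmp l)) (summable_exp_pi.mul_left _)

lemma hasDerivAt_T_v (τ : M3) (c : ℝ) (hc0 : 0 < c)
    (hc : ∀ x : Fin 3 → ℝ, c * (x 0 ^ 2 + x 1 ^ 2 + x 2 ^ 2) ≤ ∑ i, ∑ j, x i * (τ i j).im * x j)
    (a b : Fin 3 → ℤ) (ha : ∀ i, |(a i : ℝ)| ≤ 1) (m n : ℕ) (u v : ℂ)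
    (hu : ‖u‖ ≤ c / 4) (hv : v ∈ Metric.ball (0 : ℂ) (c / 4)) :
    HasDerivAt (fun w => T τ a b m n u w) (T τ a b m (n + 1) u v) v := by
  show HasDerivAt (fun w => ∑' l, term τ a b m n u w l) (∑' l, term τ a b m (n + 1) u v l) v
  refine hasDerivAt_tsum_of_isPreconnected
    (g := fun l w => term τ a b m n u w l) (g' := fun l w => term τ a b m (n + 1) u w l)
    (summable_majorant c hc0 a ha (m + (n + 1)))
    Metric.isOpen_ball ((convex_ball (0 : ℂ) (c / 4)).isPreconnected) ?_ ?_
    (Metric.mem_ball_self (by linarith : (0:ℝ) < c / 4)) ?_ hv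
  · intro l y _
    show HasDerivAt (fun w => term τ a b m n u w l) (term τ a b m (n + 1) u y l) y
    have h := (((hasDerivAt_id y).const_mul (gf a l)).const_add
      ((Real.pi : ℂ) * Complex.I * Qf τ a l + bf a l * u)).cexp
    have h2 := (h.const_mul (bf a l ^ m * gf a l ^ n)).mul_const (Ef a b l)
    rw [show term τ a b m (n + 1) u y l = bf a l ^ m * gf a l ^ n *
        (Complex.exp ((Real.pi : ℂ) * Complex.I * Qf τ a l + bf a l * u + gf a l * y) *
          (gf a l * 1)) * Ef a b l from by unfold term; ring]
    exact h2
  · intro l y hy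
    exact norm_term_le τ c hc a b m (n + 1) u y hu (le_of_lt (mem_ball_zero_iff.mp hy)) l
  · apply Summable.of_norm_bounded (summable_majorant c hc0 a ha (m + n))
    intro l
    exact norm_term_le τ c hc a b m n u 0 hu (by rw [norm_zero]; linarith) l

lemma hasDerivAt_T_u (τ : M3) (c : ℝ) (hc0 : 0 < c)
    (hc : ∀ x : Fin 3 → ℝ, c * (x 0 ^ 2 + x 1 ^ 2 + x 2 ^ 2) ≤ ∑ i, ∑ j, x i * (τ i j).im * x j)
    (a b : Fin 3 → ℤ) (ha : ∀ i, |(a i : ℝ)| ≤ 1) (m n : ℕ) (u v : ℂ)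
    (hv : ‖v‖ ≤ c / 4) (hu : u ∈ Metric.ball (0 : ℂ) (c / 4)) :
    HasDerivAt (fun w => T τ a b m n w v) (T τ a b (m + 1) n u v) u := by
  show HasDerivAt (fun w => ∑' l, term τ a b m n w v l) (∑' l, term τ a b (m + 1) n u v l) u
  refine hasDerivAt_tsum_of_isPreconnected
    (g := fun l w => term τ a b m n w v l) (g' := fun l w => term τ a b (m + 1) n w v l)
    (summable_majorant c hc0 a ha ((m + 1) + n))
    Metric.isOpen_ball ((convex_ball (0 : ℂ) (c / 4)).isPreconnected) ?_ ?_
    (Metric.mem_ball_self (by linarith : (0:ℝ) < c / 4)) ?_ hu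
  · intro l y _
    show HasDerivAt (fun w => term τ a b m n w v l) (term τ a b (m + 1) n y v l) y
    have h0 := ((((hasDerivAt_id y).const_mul (bf a l)).const_add
      ((Real.pi : ℂ) * Complex.I * Qf τ a l)).add_const (gf a l * v)).cexp
    have h2 := (h0.const_mul (bf a l ^ m * gf a l ^ n)).mul_const (Ef a b l)
    rw [show term τ a b (m + 1) n y v l = bf a l ^ m * gf a l ^ n *
        (Complex.exp ((Real.pi : ℂ) * Complex.I * Qf τ a l + bf a l * y +
          gf a l * v) * (bf a l * 1)) * Ef a b l from by unfold term; ring]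
    exact h2
  · intro l y hy
    exact norm_term_le τ c hc a b (m + 1) n y v (le_of_lt (mem_ball_zero_iff.mp hy)) hv l
  · apply Summable.of_norm_bounded (summable_majorant c hc0 a ha (m + n))
    intro l
    exact norm_term_le τ c hc a b m n 0 v (by rw [norm_zero]; positivity) hv l

lemma quad_expand (τ : M3) (x : Fin 3 → ℂ) (u v : ℂ) :
    ∑ i, ∑ j, x i * (τ + u • Sm 0 2 + v • Sm 1 2) i j * x j
      = (∑ i, ∑ j, x i * τ i j * x j) + 2 * (x 0 * x 2) * u + 2 * (x 1 * x 2) * v := by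
  simp [Sm, Matrix.add_apply, Matrix.smul_apply, Matrix.single, Matrix.of_apply,
    Fin.sum_univ_three]
  ring

lemma theta_eq (τ : M3) (a b : Fin 3 → ℤ) (u v : ℂ) :
    thetaNull 3 a b (τ + u • Sm 0 2 + v • Sm 1 2) = T τ a b 0 0 u v := by
  unfold thetaNull thetaFn T term
  apply tsum_congr
  intro l
  rw [pow_zero, pow_zero, one_mul, one_mul]
  congr 1
  · congr 1
    rw [quad_expand τ (fun i => (l i : ℂ) + (a i : ℂ) / 2) u v]
    unfold Qf bf gf
    simp only [cv_eq]
    ring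
  · unfold Ef
    congr 1
    simp only [cv_eq, Pi.zero_apply, zero_add]

abbrev K : Type := (Fin 3 → Fin 2) × (Fin 3 → Fin 2)

def za (k : K) : Fin 3 → ℤ := fun i => ((k.1 i : ℕ) : ℤ)
def zbv (k : K) : Fin 3 → ℤ := fun i => ((k.2 i : ℕ) : ℤ)

def evenChar (k : K) : Prop := Even (∑ i, (k.1 i : ℕ) * (k.2 i : ℕ))

instance : DecidablePred evenChar := fun k => by unfold evenChar; infer_instance

def Vk (k : K) : Prop := evenChar k ∧ k.1 2 = 1 ∧ k.2 2 = 1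

instance : DecidablePred Vk := fun k => by unfold Vk; infer_instance

lemma za_abs (k : K) : ∀ i, |(za k i : ℝ)| ≤ 1 := by
  intro i
  unfold za
  have h : (k.1 i : ℕ) ≤ 1 := Nat.lt_succ_iff.mp (k.1 i).is_lt
  rw [_root_.abs_of_nonneg (by positivity)]
  exact_mod_cast h

def Tk (τ : M3) (k : K) (m n : ℕ) (u v : ℂ) : ℂ :=
  if evenChar k then T τ (za k) (zbv k) m n u v else (if m = 0 ∧ n = 0 then 1 else 0)

def G (τ : M3) (M N : K → ℕ) (u v : ℂ) : ℂ := ∏ k : K, Tk τ k (M k) (N k) u v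

lemma hasDerivAt_Tk_v (τ : M3) (c : ℝ) (hc0 : 0 < c)
    (hc : ∀ x : Fin 3 → ℝ, c * (x 0 ^ 2 + x 1 ^ 2 + x 2 ^ 2) ≤ ∑ i, ∑ j, x i * (τ i j).im * x j)
    (k : K) (m n : ℕ) (u v : ℂ) (hu : ‖u‖ ≤ c / 4) (hv : v ∈ Metric.ball (0 : ℂ) (c / 4)) :
    HasDerivAt (fun w => Tk τ k m n u w) (Tk τ k m (n + 1) u v) v := by
  unfold Tk
  by_cases h : evenChar k
  · simp only [if_pos h]
    exact hasDerivAt_T_v τ c hc0 hc (za k) (zbv k) (za_abs k) m n u v hu hv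
  · simp only [if_neg h]
    rw [show (if m = 0 ∧ n + 1 = 0 then (1:ℂ) else 0) = 0 from by simp]
    exact hasDerivAt_const _ _

lemma hasDerivAt_Tk_u (τ : M3) (c : ℝ) (hc0 : 0 < c)
    (hc : ∀ x : Fin 3 → ℝ, c * (x 0 ^ 2 + x 1 ^ 2 + x 2 ^ 2) ≤ ∑ i, ∑ j, x i * (τ i j).im * x j)
    (k : K) (m n : ℕ) (u v : ℂ) (hv : ‖v‖ ≤ c / 4) (hu : u ∈ Metric.ball (0 : ℂ) (c / 4)) :
    HasDerivAt (fun w => Tk τ k m n w v) (Tk τ k (m + 1) n u v) u := by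
  unfold Tk
  by_cases h : evenChar k
  · simp only [if_pos h]
    exact hasDerivAt_T_u τ c hc0 hc (za k) (zbv k) (za_abs k) m n u v hv hu
  · simp only [if_neg h]
    rw [show (if m + 1 = 0 ∧ n = 0 then (1:ℂ) else 0) = 0 from by simp]
    exact hasDerivAt_const _ _

lemma hasDerivAt_G_v (τ : M3) (c : ℝ) (hc0 : 0 < c)
    (hc : ∀ x : Fin 3 → ℝ, c * (x 0 ^ 2 + x 1 ^ 2 + x 2 ^ 2) ≤ ∑ i, ∑ j, x i * (τ i j).im * x j)
    (M N : K → ℕ) (u v : ℂ) (hu : ‖u‖ ≤ c / 4) (hv : v ∈ Metric.ball (0 : ℂ) (c / 4)) :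
    HasDerivAt (fun w => G τ M N u w)
      (∑ j : K, G τ M (fun k => if k = j then N k + 1 else N k) u v) v := by
  classical
  have h := HasDerivAt.fun_finsetProd (𝕜 := ℂ) (x := v) (u := (Finset.univ : Finset K))
    (f := fun k w => Tk τ k (M k) (N k) u w) (f' := fun k => Tk τ k (M k) (N k + 1) u v)
    (fun k _ => hasDerivAt_Tk_v τ c hc0 hc k (M k) (N k) u v hu hv)
  have hval : (∑ j ∈ (Finset.univ : Finset K),
        (∏ k ∈ Finset.univ.erase j, Tk τ k (M k) (N k) u v) • Tk τ j (M j) (N j + 1) u v)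
      = ∑ j : K, G τ M (fun k => if k = j then N k + 1 else N k) u v := by
    apply Finset.sum_congr rfl
    intro j _
    have e1 : G τ M (fun k => if k = j then N k + 1 else N k) u v
        = Tk τ j (M j) (N j + 1) u v * ∏ k ∈ Finset.univ.erase j, Tk τ k (M k) (N k) u v := by
      unfold G
      rw [← Finset.mul_prod_erase Finset.univ _ (Finset.mem_univ j)]
      congr 1
      · show Tk τ j (M j) (if j = j then N j + 1 else N j) u v = Tk τ j (M j) (N j + 1) u v
        rw [if_pos rfl]
      · apply Finset.prod_congr rfl
        intro k hk
        show Tk τ k (M k) (if k = j then N k + 1 else N k) u v = Tk τ k (M k) (N k) u v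
        rw [if_neg (Finset.ne_of_mem_erase hk)]
    rw [e1, smul_eq_mul, mul_comm]
  rw [← hval]
  exact h

lemma hasDerivAt_G_u (τ : M3) (c : ℝ) (hc0 : 0 < c)
    (hc : ∀ x : Fin 3 → ℝ, c * (x 0 ^ 2 + x 1 ^ 2 + x 2 ^ 2) ≤ ∑ i, ∑ j, x i * (τ i j).im * x j)
    (M N : K → ℕ) (u v : ℂ) (hv : ‖v‖ ≤ c / 4) (hu : u ∈ Metric.ball (0 : ℂ) (c / 4)) :
    HasDerivAt (fun w => G τ M N w v)
      (∑ j : K, G τ (fun k => if k = j then M k + 1 else M k) N u v) u := by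
  classical
  have h := HasDerivAt.fun_finsetProd (𝕜 := ℂ) (x := u) (u := (Finset.univ : Finset K))
    (f := fun k w => Tk τ k (M k) (N k) w v) (f' := fun k => Tk τ k (M k + 1) (N k) u v)
    (fun k _ => hasDerivAt_Tk_u τ c hc0 hc k (M k) (N k) u v hv hu)
  have hval : (∑ j ∈ (Finset.univ : Finset K),
        (∏ k ∈ Finset.univ.erase j, Tk τ k (M k) (N k) u v) • Tk τ j (M j + 1) (N j) u v)
      = ∑ j : K, G τ (fun k => if k = j then M k + 1 else M k) N u v := by
    apply Finset.sum_congr rfl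
    intro j _
    have e1 : G τ (fun k => if k = j then M k + 1 else M k) N u v
        = Tk τ j (M j + 1) (N j) u v * ∏ k ∈ Finset.univ.erase j, Tk τ k (M k) (N k) u v := by
      unfold G
      rw [← Finset.mul_prod_erase Finset.univ _ (Finset.mem_univ j)]
      congr 1
      · show Tk τ j (if j = j then M j + 1 else M j) (N j) u v = Tk τ j (M j + 1) (N j) u v
        rw [if_pos rfl]
      · apply Finset.prod_congr rfl
        intro k hk
        show Tk τ k (if k = j then M k + 1 else M k) (N k) u v = Tk τ k (M k) (N k) u v
        rw [if_neg (Finset.ne_of_mem_erase hk)]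
    rw [e1, smul_eq_mul, mul_comm]
  rw [← hval]
  exact h

lemma main (τ : M3) (hsym : τ.IsSymm) (h02 : τ 0 2 = 0) (h12 : τ 1 2 = 0)
    (c : ℝ) (hc0 : 0 < c)
    (hc : ∀ x : Fin 3 → ℝ, c * (x 0 ^ 2 + x 1 ^ 2 + x 2 ^ 2) ≤ ∑ i, ∑ j, x i * (τ i j).im * x j) :
    ∀ n : ℕ, ∀ p q : ℕ, p + q = n → ∀ {ι : Type} (s : Finset ι) (co : ι → ℂ)
      (M N : ι → K → ℕ),
      (∀ i ∈ s, p + q < (Finset.univ.filter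
          (fun k => Vk k ∧ M i k = 0 ∧ N i k = 0)).card) →
      iteratedDeriv p (fun u : ℂ => iteratedDeriv q
        (fun v : ℂ => ∑ i ∈ s, co i * G τ (M i) (N i) u v) 0) 0 = 0 := by
  classical
  have h20 : τ 2 0 = 0 := (hsym.apply 0 2).trans h02
  have h21 : τ 2 1 = 0 := (hsym.apply 1 2).trans h12
  intro n
  induction n with
  | zero =>
    intro p q hpq ι s co M N hcond
    obtain ⟨hp, hq⟩ : p = 0 ∧ q = 0 := by omega
    subst hp; subst hq
    simp only [iteratedDeriv_zero]
    apply Finset.sum_eq_zero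
    intro i hi
    obtain ⟨k, hk⟩ := Finset.card_pos.mp (show 0 < (Finset.univ.filter
      (fun k => Vk k ∧ M i k = 0 ∧ N i k = 0)).card by have := hcond i hi; omega)
    rw [Finset.mem_filter] at hk
    obtain ⟨-, hVk, hM0, hN0⟩ := hk
    have hzero : Tk τ k (M i k) (N i k) 0 0 = 0 := by
      rw [hM0, hN0]
      unfold Tk
      rw [if_pos hVk.1]
      apply T_zero τ h02 h12 h20 h21 (za k) (zbv k) ?_ ?_ 0 0 (by simp)
      · unfold za; rw [hVk.2.1]; rfl
      · unfold zbv; rw [hVk.2.2]; rfl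
    unfold G
    rw [Finset.prod_eq_zero (Finset.mem_univ k) hzero, mul_zero]
  | succ n IH =>
    intro p q hpq ι s co M N hcond
    have hc4 : (0:ℝ) < c / 4 := by linarith
    cases q with
    | zero =>
      have hp : p = n + 1 := by omega
      subst hp
      simp only [iteratedDeriv_zero]
      rw [iteratedDeriv_succ']
      have hev : deriv (fun u : ℂ => ∑ i ∈ s, co i * G τ (M i) (N i) u 0) =ᶠ[nhds (0:ℂ)]
          fun u : ℂ => ∑ ij ∈ s ×ˢ (Finset.univ : Finset K), co ij.1 *
            G τ (fun k => if k = ij.2 then M ij.1 k + 1 else M ij.1 k) (N ij.1) u 0 := by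
        filter_upwards [Metric.ball_mem_nhds (0:ℂ) hc4] with u hu
        have H : HasDerivAt (fun u' : ℂ => ∑ i ∈ s, co i * G τ (M i) (N i) u' 0)
            (∑ i ∈ s, co i * ∑ j : K,
              G τ (fun k => if k = j then M i k + 1 else M i k) (N i) u 0) u :=
          HasDerivAt.fun_sum (fun i _ =>
            (hasDerivAt_G_u τ c hc0 hc (M i) (N i) u 0
              (by rw [norm_zero]; linarith) hu).const_mul (co i))
        rw [H.deriv, Finset.sum_product]
        exact Finset.sum_congr rfl fun i _ => by rw [Finset.mul_sum]
      rw [Filter.EventuallyEq.iteratedDeriv_eq n hev]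
      have happ := IH n 0 (by omega) (s ×ˢ (Finset.univ : Finset K)) (fun ij => co ij.1)
        (fun ij k => if k = ij.2 then M ij.1 k + 1 else M ij.1 k) (fun ij => N ij.1) ?_
      · simpa only [iteratedDeriv_zero] using happ
      · intro ij hij
        beta_reduce
        rw [Finset.mem_product] at hij
        have h1 := hcond ij.1 hij.1
        have hsub : (Finset.univ.filter (fun k => Vk k ∧ M ij.1 k = 0 ∧ N ij.1 k = 0))
            ⊆ insert ij.2 (Finset.univ.filter (fun k => Vk k ∧
              (if k = ij.2 then M ij.1 k + 1 else M ij.1 k) = 0 ∧ N ij.1 k = 0)) := by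
          intro k hk
          rw [Finset.mem_filter] at hk
          by_cases hkj : k = ij.2
          · exact Finset.mem_insert.mpr (Or.inl hkj)
          · refine Finset.mem_insert.mpr (Or.inr ?_)
            rw [Finset.mem_filter]
            exact ⟨Finset.mem_univ _, hk.2.1, by rw [if_neg hkj]; exact hk.2.2.1, hk.2.2.2⟩
        have h2 := (Finset.card_le_card hsub).trans (Finset.card_insert_le _ _)
        omega
    | succ q' =>
      have hev : (fun u : ℂ => iteratedDeriv (q' + 1)
            (fun v : ℂ => ∑ i ∈ s, co i * G τ (M i) (N i) u v) 0)
          =ᶠ[nhds (0:ℂ)] fun u : ℂ => iteratedDeriv q'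
            (fun v : ℂ => ∑ ij ∈ s ×ˢ (Finset.univ : Finset K), co ij.1 *
              G τ (M ij.1) (fun k => if k = ij.2 then N ij.1 k + 1 else N ij.1 k) u v) 0 := by
        filter_upwards [Metric.ball_mem_nhds (0:ℂ) hc4] with u hu
        rw [iteratedDeriv_succ']
        apply Filter.EventuallyEq.iteratedDeriv_eq q'
        filter_upwards [Metric.ball_mem_nhds (0:ℂ) hc4] with v hv
        have H : HasDerivAt (fun v' : ℂ => ∑ i ∈ s, co i * G τ (M i) (N i) u v')
            (∑ i ∈ s, co i * ∑ j : K,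
              G τ (M i) (fun k => if k = j then N i k + 1 else N i k) u v) v :=
          HasDerivAt.fun_sum (fun i _ =>
            (hasDerivAt_G_v τ c hc0 hc (M i) (N i) u v
              (le_of_lt (mem_ball_zero_iff.mp hu)) hv).const_mul (co i))
        rw [H.deriv, Finset.sum_product]
        exact Finset.sum_congr rfl fun i _ => by rw [Finset.mul_sum]
      rw [Filter.EventuallyEq.iteratedDeriv_eq p hev]
      apply IH p q' (by omega) (s ×ˢ (Finset.univ : Finset K)) (fun ij => co ij.1)
        (fun ij => M ij.1) (fun ij k => if k = ij.2 then N ij.1 k + 1 else N ij.1 k)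
      intro ij hij
      beta_reduce
      rw [Finset.mem_product] at hij
      have h1 := hcond ij.1 hij.1
      have hsub : (Finset.univ.filter (fun k => Vk k ∧ M ij.1 k = 0 ∧ N ij.1 k = 0))
          ⊆ insert ij.2 (Finset.univ.filter (fun k => Vk k ∧ M ij.1 k = 0 ∧
            (if k = ij.2 then N ij.1 k + 1 else N ij.1 k) = 0)) := by
        intro k hk
        rw [Finset.mem_filter] at hk
        by_cases hkj : k = ij.2
        · exact Finset.mem_insert.mpr (Or.inl hkj)
        · refine Finset.mem_insert.mpr (Or.inr ?_)
          rw [Finset.mem_filter]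
          exact ⟨Finset.mem_univ _, hk.2.1, hk.2.2.1, by rw [if_neg hkj]; exact hk.2.2.2⟩
      have h2 := (Finset.card_le_card hsub).trans (Finset.card_insert_le _ _)
      omega

lemma chi18_eq (τ : M3) (u v : ℂ) :
    chi18 (τ + u • Sm 0 2 + v • Sm 1 2) = G τ (fun _ => 0) (fun _ => 0) u v := by
  unfold chi18 G
  rw [Fintype.prod_prod_type]
  apply Finset.prod_congr rfl
  intro a _
  apply Finset.prod_congr rfl
  intro b _
  by_cases h : Even (∑ i, (a i : ℕ) * (b i : ℕ))
  · have h' : evenChar (a, b) := h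
    rw [if_pos h]
    unfold Tk
    rw [if_pos h']
    exact theta_eq τ (za (a, b)) (zbv (a, b)) u v
  · have h' : ¬ evenChar (a, b) := h
    rw [if_neg h]
    unfold Tk
    rw [if_neg h', if_pos ⟨rfl, rfl⟩]

lemma card_Vk : 5 < (Finset.univ.filter (fun k : K => Vk k)).card := by decide

end Chi18V

/-- `χ₁₈` vanishes to order at least 6 along the locus of decomposable period matrices. -/
theorem statement_12 (τ : Matrix (Fin 3) (Fin 3) ℂ) (hτ : τ ∈ Hg 3)
    (h13 : τ 0 2 = 0) (h23 : τ 1 2 = 0) (p q : ℕ) (hpq : p + q ≤ 5) :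
    (mdOp 0 2)^[p] ((mdOp 1 2)^[q] chi18) τ = 0 := by
  classical
  obtain ⟨hsym, hpos⟩ := hτ
  obtain ⟨c, hc0, hc'⟩ := Chi18V.coercive hpos
  have hc : ∀ x : Fin 3 → ℝ, c * (x 0 ^ 2 + x 1 ^ 2 + x 2 ^ 2)
      ≤ ∑ i, ∑ j, x i * (τ i j).im * x j := fun x => hc' x
  rw [Chi18V.mdOp_iterate]
  have hinner : ∀ u : ℂ, (mdOp 1 2)^[q] chi18 (τ + u • Chi18V.Sm 0 2)
      = iteratedDeriv q (fun v : ℂ => ∑ _i ∈ (Finset.univ : Finset Unit),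
          (1:ℂ) * Chi18V.G τ (fun _ => 0) (fun _ => 0) u v) 0 := by
    intro u
    rw [Chi18V.mdOp_iterate]
    congr 1
    funext v
    rw [Chi18V.chi18_eq]
    simp
  simp only [hinner]
  refine Chi18V.main τ hsym h13 h23 c hc0 hc (p + q) p q rfl
    (Finset.univ : Finset Unit) (fun _ => 1) (fun _ _ => 0) (fun _ _ => 0) ?_
  intro i _
  have hfix : Finset.filter (fun k : Chi18V.K => Chi18V.Vk k ∧ (0:ℕ) = 0 ∧ (0:ℕ) = 0)
        Finset.univ
      = Finset.filter (fun k : Chi18V.K => Chi18V.Vk k) Finset.univ := by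
    apply Finset.filter_congr
    intro k _
    simp
  rw [hfix]
  have := Chi18V.card_Vk
  omega

end
end
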